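/- arXiv:1505.00235 — 9 statements merged into one kernel-verified Lean document; each statement's English description precedes it below -/
import Mathlib

section
/- For all sufficiently large n, every I₃-free digraph on {0,…,n−1} is a bitournament or belongs to A(n) ∪ B(n) ∪ C(n); that is, F(n) ⊆ T(n) ∪ A(n) ∪ B(n) ∪ C(n). -/
open scoped Classical

/-- `E` is a digraph relation on `Fin n`: irreflexive and asymmetric. -/
def DigraphOn (n : ℕ) (E : Fin n → Fin n → Bool) : Prop :=
  (∀ x, E x x = false) ∧ ∀ x y, E x y = true → E y x = false

/-- `E` is I₃-free: any three distinct vertices span at least one arrow. -/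
def I3FreeOn (n : ℕ) (E : Fin n → Fin n → Bool) : Prop :=
  ∀ x y z : Fin n, x ≠ y → y ≠ z → x ≠ z →
    E x y = true ∨ E y x = true ∨ E y z = true ∨ E z y = true ∨
    E x z = true ∨ E z x = true

/-- The set `S` induces a tournament in `E`. -/
def IndTournOn (n : ℕ) (E : Fin n → Fin n → Bool) (S : Finset (Fin n)) : Prop :=
  ∀ x ∈ S, ∀ y ∈ S, x ≠ y → E x y = true ∨ E y x = true

/-- `E` is a bitournament: a digraph whose vertex set splits into two tournaments. -/
def BitournOn (n : ℕ) (E : Fin n → Fin n → Bool) : Prop :=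
  DigraphOn n E ∧ ∃ S : Finset (Fin n), IndTournOn n E S ∧ IndTournOn n E Sᶜ

/-- The set of I₃-free digraphs on `{0, …, n-1}`. -/
noncomputable def Fset (n : ℕ) : Finset (Fin n → Fin n → Bool) :=
  Finset.univ.filter fun E => DigraphOn n E ∧ I3FreeOn n E

/-- The set of bitournaments on `{0, …, n-1}`. -/
noncomputable def Tset (n : ℕ) : Finset (Fin n → Fin n → Bool) :=
  Finset.univ.filter fun E => BitournOn n E

/-- `x ≁ y` : distinct, unrelated vertices. -/
def NadjOn (n : ℕ) (E : Fin n → Fin n → Bool) (x y : Fin n) : Prop :=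
  x ≠ y ∧ E x y = false ∧ E y x = false

/-- `Δ(v)`, the set of vertices non-adjacent to `v`. -/
noncomputable def DeltaOn (n : ℕ) (E : Fin n → Fin n → Bool) (v : Fin n) : Finset (Fin n) :=
  Finset.univ.filter fun x => NadjOn n E x v

/-- `Δ(Q) = (⋃_{v ∈ Q} Δ(v)) \ Q`. -/
noncomputable def DeltaSetOn (n : ℕ) (E : Fin n → Fin n → Bool) (Q : Finset (Fin n)) :
    Finset (Fin n) :=
  (Q.biUnion (DeltaOn n E)) \ Q

/-- `A(n)`: I₃-free digraphs with a vertex `v` with `|Δ(v)| ≤ ⌊log₂ n⌋`. -/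
noncomputable def Aset (n : ℕ) : Finset (Fin n → Fin n → Bool) :=
  (Fset n).filter fun E => ∃ v : Fin n, (DeltaOn n E v).card ≤ Nat.log 2 n

/-- `B(n)`. -/
noncomputable def Bset (n : ℕ) : Finset (Fin n → Fin n → Bool) :=
  ((Fset n) \ (Aset n)).filter fun E =>
    ∃ v : Fin n, ∃ Q ⊆ DeltaOn n E v, Q.card = Nat.log 2 n ∧
      ((DeltaSetOn n E Q).card : ℝ) ≤ (1 / 2 - 1 / 10 ^ 6) * n

/-- `C(n)`. -/
noncomputable def Cset (n : ℕ) : Finset (Fin n → Fin n → Bool) :=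
  ((Fset n) \ (Aset n ∪ Bset n)).filter fun E =>
    ∃ x y : Fin n, x ≠ y ∧ NadjOn n E x y ∧
      ∃ Qx ⊆ DeltaOn n E x, ∃ Qy ⊆ DeltaOn n E y,
        Qx.card = Nat.log 2 n ∧ Qy.card = Nat.log 2 n ∧
        (n : ℝ) / 100 ≤ ((DeltaSetOn n E Qx ∩ DeltaSetOn n E Qy).card : ℝ)

/- ### Auxiliary lemmas -/

lemma sd_card_eq {n : ℕ} (A B : Finset (Fin n)) :
    ((symmDiff A B).card : ℝ) = A.card + B.card - 2 * (A ∩ B).card := by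
  have h1 : symmDiff A B = (A ∪ B) \ (A ∩ B) := symmDiff_eq_sup_sdiff_inf A B
  have h2 : (A ∩ B) ⊆ (A ∪ B) := (Finset.inter_subset_left).trans Finset.subset_union_left
  have h3 : (symmDiff A B).card = (A ∪ B).card - (A ∩ B).card := by rw [h1, Finset.card_sdiff_of_subset h2]
  have h4 := Finset.card_union_add_card_inter A B
  have h5 : (A ∩ B).card ≤ (A ∪ B).card := Finset.card_le_card h2
  rw [h3, Nat.cast_sub h5]
  have : ((A ∪ B).card : ℝ) + (A ∩ B).card = A.card + B.card := by exact_mod_cast h4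
  linarith

lemma sd_tri {n : ℕ} (A B C : Finset (Fin n)) :
    ((symmDiff A C).card : ℝ) ≤ (symmDiff A B).card + (symmDiff B C).card := by
  have h := symmDiff_triangle A B C
  have h1 := Finset.card_le_card h
  have h2 := Finset.card_union_le (symmDiff A B) (symmDiff B C)
  exact_mod_cast le_trans h1 h2

lemma sd_compl {n : ℕ} (A B : Finset (Fin n)) :
    ((symmDiff A (Bᶜ)).card : ℝ) = (n : ℝ) - (symmDiff A B).card := by
  have h : symmDiff A (Bᶜ) = (symmDiff A B)ᶜ := by
    ext x; simp only [Finset.mem_compl, Finset.mem_symmDiff]; tauto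
  rw [h, Finset.card_compl, Fintype.card_fin,
    Nat.cast_sub (by simpa using Finset.card_le_univ (symmDiff A B))]

lemma sd_comm_card {n : ℕ} (A B : Finset (Fin n)) :
    ((symmDiff A B).card : ℝ) = ((symmDiff B A).card : ℝ) := by
  rw [symmDiff_comm]

lemma nadj_symm {n : ℕ} {E : Fin n → Fin n → Bool} {x y : Fin n}
    (h : NadjOn n E x y) : NadjOn n E y x :=
  ⟨h.1.symm, h.2.2, h.2.1⟩

lemma main_bitourn {n : ℕ} (hn : 1 ≤ n) (E : Fin n → Fin n → Bool)
    (hA : ∀ v : Fin n, Nat.log 2 n < (DeltaOn n E v).card)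
    (hB : ∀ v : Fin n, ∀ Q : Finset (Fin n), Q ⊆ DeltaOn n E v → Q.card = Nat.log 2 n →
      (1 / 2 - 1 / 10 ^ 6 : ℝ) * n < ((DeltaSetOn n E Q).card : ℝ))
    (hC : ∀ x y : Fin n, NadjOn n E x y →
      ∀ Qx : Finset (Fin n), Qx ⊆ DeltaOn n E x →
      ∀ Qy : Finset (Fin n), Qy ⊆ DeltaOn n E y →
      Qx.card = Nat.log 2 n → Qy.card = Nat.log 2 n →
      ((DeltaSetOn n E Qx ∩ DeltaSetOn n E Qy).card : ℝ) < (n : ℝ) / 100) :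
    ∃ S : Finset (Fin n), IndTournOn n E S ∧ IndTournOn n E Sᶜ := by
  have hk : ∀ v : Fin n, ∃ Q ⊆ DeltaOn n E v, Q.card = Nat.log 2 n :=
    fun v => Finset.exists_subset_card_eq (le_of_lt (hA v))
  choose Q hQsub hQcard using hk
  have hnpos : (0 : ℝ) < n := by exact_mod_cast hn
  have hApos : ∀ v, (1 / 2 - 1 / 10 ^ 6 : ℝ) * n < ((DeltaSetOn n E (Q v)).card : ℝ) :=
    fun v => hB v (Q v) (hQsub v) (hQcard v)
  -- edge ⇒ symm diff of the two Δ-sets is large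
  have hedge : ∀ u v, NadjOn n E u v →
      (98 / 100 - 2 / 10 ^ 6 : ℝ) * n
        < ((symmDiff (DeltaSetOn n E (Q u)) (DeltaSetOn n E (Q v))).card : ℝ) := by
    intro u v huv
    rw [sd_card_eq]
    have h1 := hApos u
    have h2 := hApos v
    have h3 := hC u v huv (Q u) (hQsub u) (Q v) (hQsub v) (hQcard u) (hQcard v)
    linarith
  have hcedge : ∀ u v, NadjOn n E u v →
      ((symmDiff (DeltaSetOn n E (Q u)) ((DeltaSetOn n E (Q v))ᶜ)).card : ℝ)
        < (2 / 100 + 2 / 10 ^ 6) * n := by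
    intro u v huv
    rw [sd_compl]
    have := hedge u v huv
    linarith
  -- membership of `a` in ΔQ(v) produces a 2-path in the non-adjacency graph
  have hmem : ∀ v a : Fin n, a ∈ DeltaSetOn n E (Q v) →
      ∃ q : Fin n, NadjOn n E a q ∧ NadjOn n E q v := by
    intro v a ha
    rw [DeltaSetOn, Finset.mem_sdiff, Finset.mem_biUnion] at ha
    obtain ⟨⟨q, hqQ, haq⟩, -⟩ := ha
    exact ⟨q, (Finset.mem_filter.mp haq).2, (Finset.mem_filter.mp (hQsub v hqQ)).2⟩
  have hstep : ∀ v a : Fin n, a ∈ DeltaSetOn n E (Q v) →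
      ((symmDiff (DeltaSetOn n E (Q a)) (DeltaSetOn n E (Q v))).card : ℝ)
        < 2 * ((2 / 100 + 2 / 10 ^ 6) * n) := by
    intro v a ha
    obtain ⟨q, haq, hqv⟩ := hmem v a ha
    have t1 := hcedge a q haq
    have t2 := hcedge v q (nadj_symm hqv)
    have tri := sd_tri (DeltaSetOn n E (Q a)) ((DeltaSetOn n E (Q q))ᶜ) (DeltaSetOn n E (Q v))
    have hc := sd_comm_card ((DeltaSetOn n E (Q q))ᶜ) (DeltaSetOn n E (Q v))
    linarith
  -- the anchor vertex
  set x₀ : Fin n := ⟨0, hn⟩ with hx₀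
  -- dichotomy : every Δ-set is close to the anchor's Δ-set or to its complement
  have hdich : ∀ v : Fin n,
      ((symmDiff (DeltaSetOn n E (Q v)) (DeltaSetOn n E (Q x₀))).card : ℝ)
          < 4 * ((2 / 100 + 2 / 10 ^ 6) * n)
      ∨ ((symmDiff (DeltaSetOn n E (Q v)) ((DeltaSetOn n E (Q x₀))ᶜ)).card : ℝ)
          < 4 * ((2 / 100 + 2 / 10 ^ 6) * n) := by
    intro v
    by_cases hne : (DeltaSetOn n E (Q v) ∩ DeltaSetOn n E (Q x₀)).Nonempty
    · left
      obtain ⟨a, ha⟩ := hne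
      rw [Finset.mem_inter] at ha
      have s1 := hstep v a ha.1
      have s2 := hstep x₀ a ha.2
      have tri := sd_tri (DeltaSetOn n E (Q v)) (DeltaSetOn n E (Q a)) (DeltaSetOn n E (Q x₀))
      have hc := sd_comm_card (DeltaSetOn n E (Q v)) (DeltaSetOn n E (Q a))
      linarith
    · right
      have hint : ((DeltaSetOn n E (Q v) ∩ DeltaSetOn n E (Q x₀)).card : ℝ) = 0 := by
        rw [Finset.not_nonempty_iff_eq_empty] at hne
        rw [hne]; simp
      rw [sd_compl, sd_card_eq]
      have h1 := hApos v
      have h2 := hApos x₀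
      linarith
  -- the bipartition
  refine ⟨Finset.univ.filter (fun v =>
      ((symmDiff (DeltaSetOn n E (Q v)) (DeltaSetOn n E (Q x₀))).card : ℝ)
        < 4 * ((2 / 100 + 2 / 10 ^ 6) * n)), ?_, ?_⟩
  · intro x hx y hy hxy
    by_contra hcon
    push_neg at hcon
    have hnadj : NadjOn n E x y := by
      refine ⟨hxy, ?_, ?_⟩
      · simpa using hcon.1
      · simpa using hcon.2
    have hdx := (Finset.mem_filter.mp hx).2
    have hdy := (Finset.mem_filter.mp hy).2
    have tri := sd_tri (DeltaSetOn n E (Q x)) (DeltaSetOn n E (Q x₀)) (DeltaSetOn n E (Q y))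
    have hc := sd_comm_card (DeltaSetOn n E (Q x₀)) (DeltaSetOn n E (Q y))
    have he := hedge x y hnadj
    linarith
  · intro x hx y hy hxy
    by_contra hcon
    push_neg at hcon
    have hnadj : NadjOn n E x y := by
      refine ⟨hxy, ?_, ?_⟩
      · simpa using hcon.1
      · simpa using hcon.2
    rw [Finset.mem_compl, Finset.mem_filter] at hx hy
    have hdx : ((symmDiff (DeltaSetOn n E (Q x)) ((DeltaSetOn n E (Q x₀))ᶜ)).card : ℝ)
        < 4 * ((2 / 100 + 2 / 10 ^ 6) * n) := by
      rcases hdich x with h | h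
      · exact absurd ⟨Finset.mem_univ x, h⟩ hx
      · exact h
    have hdy : ((symmDiff (DeltaSetOn n E (Q y)) ((DeltaSetOn n E (Q x₀))ᶜ)).card : ℝ)
        < 4 * ((2 / 100 + 2 / 10 ^ 6) * n) := by
      rcases hdich y with h | h
      · exact absurd ⟨Finset.mem_univ y, h⟩ hy
      · exact h
    have tri := sd_tri (DeltaSetOn n E (Q x)) ((DeltaSetOn n E (Q x₀))ᶜ) (DeltaSetOn n E (Q y))
    have hc := sd_comm_card ((DeltaSetOn n E (Q x₀))ᶜ) (DeltaSetOn n E (Q y))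
    have he := hedge x y hnadj
    linarith

/-- For sufficiently large `n`, `F(n) ⊆ T(n) ∪ A(n) ∪ B(n) ∪ C(n)`. -/
theorem Fset_subset_Tset_union_ABC :
    ∃ N : ℕ, ∀ n : ℕ, N ≤ n → Fset n ⊆ Tset n ∪ Aset n ∪ Bset n ∪ Cset n := by
  refine ⟨1, ?_⟩
  intro n hn E hEF
  have hF := Finset.mem_filter.mp hEF
  have hdig := hF.2.1
  simp only [Finset.mem_union]
  by_cases hA : ∃ v : Fin n, (DeltaOn n E v).card ≤ Nat.log 2 n
  · exact Or.inl (Or.inl (Or.inr (Finset.mem_filter.mpr ⟨hEF, hA⟩)))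
  by_cases hB : ∃ v : Fin n, ∃ Q ⊆ DeltaOn n E v, Q.card = Nat.log 2 n ∧
      ((DeltaSetOn n E Q).card : ℝ) ≤ (1 / 2 - 1 / 10 ^ 6) * n
  · refine Or.inl (Or.inr (Finset.mem_filter.mpr ⟨Finset.mem_sdiff.mpr ⟨hEF, ?_⟩, hB⟩))
    intro hmem
    exact hA (Finset.mem_filter.mp hmem).2
  by_cases hC : ∃ x y : Fin n, x ≠ y ∧ NadjOn n E x y ∧
      ∃ Qx ⊆ DeltaOn n E x, ∃ Qy ⊆ DeltaOn n E y,
        Qx.card = Nat.log 2 n ∧ Qy.card = Nat.log 2 n ∧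
        (n : ℝ) / 100 ≤ ((DeltaSetOn n E Qx ∩ DeltaSetOn n E Qy).card : ℝ)
  · refine Or.inr (Finset.mem_filter.mpr ⟨Finset.mem_sdiff.mpr ⟨hEF, ?_⟩, hC⟩)
    intro hmem
    rw [Finset.mem_union] at hmem
    rcases hmem with h | h
    · exact hA (Finset.mem_filter.mp h).2
    · exact hB (Finset.mem_filter.mp h).2
  · push_neg at hA hB hC
    refine Or.inl (Or.inl (Or.inl (Finset.mem_filter.mpr ⟨Finset.mem_univ _, hdig, ?_⟩)))
    exact main_bitourn hn E hA (fun v Q h1 h2 => hB v Q h1 h2)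
      (fun x y hxy Qx hQx Qy hQy h1 h2 => hC x y hxy.1 hxy Qx hQx Qy hQy h1 h2)
end

section
/- For every n, |T(n+1)| ≥ 6^{n/2}·|T(n)| (as an inequality of real numbers), where T(n) is the set of bitournaments on {0,…,n−1}. -/
open scoped Classical

/-- restriction to the first n vertices -/
def resE (n : ℕ) (E : Fin (n+1) → Fin (n+1) → Bool) : Fin n → Fin n → Bool :=
  fun i j => E i.castSucc j.castSucc

lemma resE_mem {n : ℕ} {E : Fin (n+1) → Fin (n+1) → Bool} (hE : E ∈ Tset (n+1)) :
    resE n E ∈ Tset n := by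
  simp only [Tset, Finset.mem_filter, Finset.mem_univ, true_and] at hE ⊢
  obtain ⟨⟨hirr, hasym⟩, S, hS, hSc⟩ := hE
  refine ⟨⟨fun x => hirr _, fun x y h => hasym _ _ h⟩,
    Finset.univ.filter (fun i : Fin n => i.castSucc ∈ S), ?_, ?_⟩
  · intro x hx y hy hxy
    simp only [Finset.mem_filter, Finset.mem_univ, true_and] at hx hy
    exact hS _ hx _ hy (fun h => hxy (Fin.castSucc_injective n h))
  · intro x hx y hy hxy
    simp only [Finset.mem_compl, Finset.mem_filter, Finset.mem_univ, true_and] at hx hy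
    exact hSc _ (Finset.mem_compl.mpr hx) _ (Finset.mem_compl.mpr hy)
      (fun h => hxy (Fin.castSucc_injective n h))

/-- extend a digraph on n vertices by one more vertex, with data d:
d u = 0: no edge, d u = 1: u → v, d u = 2: v → u. -/
def extE {n : ℕ} (E : Fin n → Fin n → Bool) (d : Fin n → Fin 3) :
    Fin (n+1) → Fin (n+1) → Bool := fun i j =>
  if hi : (i : ℕ) < n then
    if hj : (j : ℕ) < n then E ⟨i, hi⟩ ⟨j, hj⟩
    else (d ⟨i, hi⟩ == 1)
  else
    if hj : (j : ℕ) < n then (d ⟨j, hj⟩ == 2)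
    else false

lemma resE_extE {n : ℕ} (E : Fin n → Fin n → Bool) (d : Fin n → Fin 3) :
    resE n (extE E d) = E := by
  funext i j
  simp only [resE, extE, Fin.coe_castSucc, i.isLt, j.isLt, dif_pos, Fin.eta]

lemma extE_inj {n : ℕ} (E : Fin n → Fin n → Bool) :
    Function.Injective (extE E) := by
  intro d d' h
  funext u
  have h1 := congrFun (congrFun h u.castSucc) (Fin.last n)
  have h2 := congrFun (congrFun h (Fin.last n)) u.castSucc
  simp only [extE, Fin.coe_castSucc, u.isLt, dif_pos, Fin.val_last,
    lt_irrefl, dif_neg, not_lt, le_refl, Fin.eta] at h1 h2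
  have key : ∀ a b : Fin 3, ((a == 1) = (b == 1)) → ((a == 2) = (b == 2)) → a = b := by decide
  exact key _ _ h1 h2


lemma extE_lastl {n : ℕ} (E : Fin n → Fin n → Bool) (d : Fin n → Fin 3) (a : Fin n) :
    extE E d (Fin.last n) a.castSucc = (d a == 2) := by
  simp [extE, Fin.val_last, a.isLt, Fin.eta]

lemma extE_lastr {n : ℕ} (E : Fin n → Fin n → Bool) (d : Fin n → Fin 3) (a : Fin n) :
    extE E d a.castSucc (Fin.last n) = (d a == 1) := by
  simp [extE, Fin.val_last, a.isLt, Fin.eta]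

lemma extE_low {n : ℕ} (E : Fin n → Fin n → Bool) (d : Fin n → Fin 3) (a b : Fin n) :
    extE E d a.castSucc b.castSucc = E a b :=
  congrFun (congrFun (resE_extE E d) a) b

lemma extE_mem {n : ℕ} {E : Fin n → Fin n → Bool} {T : Finset (Fin n)} {d : Fin n → Fin 3}
    (hD : DigraphOn n E) (hT : IndTournOn n E T) (hTc : IndTournOn n E Tᶜ)
    (hd : ∀ u ∈ T, d u ≠ 0) : extE E d ∈ Tset (n+1) := by
  obtain ⟨hirr, hasym⟩ := hD
  simp only [Tset, Finset.mem_filter, Finset.mem_univ, true_and]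
  refine ⟨⟨?_, ?_⟩, insert (Fin.last n) (T.image Fin.castSucc), ?_, ?_⟩
  · intro x
    by_cases hx : (x:ℕ) < n <;> simp [extE, hx, hirr]
  · intro x y hxy
    by_cases hx : (x:ℕ) < n <;> by_cases hy : (y:ℕ) < n <;>
      simp only [extE, hx, hy, dif_pos, dif_neg, not_lt, beq_iff_eq, beq_eq_false_iff_ne,
        ne_eq, decide_eq_true_eq, dite_false, dite_true] at hxy ⊢
    · exact hasym _ _ hxy
    · rw [hxy]; decide
    · rw [hxy]; decide
  · -- IndTourn on insert last (T.image castSucc)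
    intro x hx y hy hxy
    simp only [Finset.mem_insert, Finset.mem_image] at hx hy
    have key : ∀ a : Fin 3, a ≠ 0 → (a == 2) = true ∨ (a == 1) = true := by decide
    rcases hx with hx | ⟨u, hu, rfl⟩
    · rcases hy with hy | ⟨v, hv, rfl⟩
      · exact absurd (hx.trans hy.symm) hxy
      · subst hx
        rw [extE_lastl, extE_lastr]
        exact key _ (hd v hv)
    · rcases hy with hy | ⟨v, hv, rfl⟩
      · subst hy
        rw [extE_lastl, extE_lastr]
        exact (key _ (hd u hu)).symm
      · rw [extE_low, extE_low]
        exact hT _ hu _ hv (fun h => hxy (by rw [h]))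
  · intro x hx y hy hxy
    simp only [Finset.mem_compl, Finset.mem_insert, Finset.mem_image, not_or, not_exists,
      not_and] at hx hy
    obtain ⟨hx1, hx2⟩ := hx
    obtain ⟨hy1, hy2⟩ := hy
    have hxn : (x:ℕ) < n := Fin.val_lt_last hx1
    have hyn : (y:ℕ) < n := Fin.val_lt_last hy1
    have ex : x = Fin.castSucc ⟨x, hxn⟩ := Fin.ext rfl
    have ey : y = Fin.castSucc ⟨y, hyn⟩ := Fin.ext rfl
    rw [ex, ey, extE_low, extE_low]
    refine hTc _ (Finset.mem_compl.mpr fun h => hx2 _ h ex.symm) _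
      (Finset.mem_compl.mpr fun h => hy2 _ h ey.symm) ?_
    intro h
    exact hxy (by rw [ex, ey, h])

lemma countD {n : ℕ} (T : Finset (Fin n)) :
    (Finset.univ.filter fun d : Fin n → Fin 3 => ∀ u ∈ T, d u ≠ 0).card
      = 2 ^ T.card * 3 ^ (n - T.card) := by
  have h : (Finset.univ.filter fun d : Fin n → Fin 3 => ∀ u ∈ T, d u ≠ 0)
      = Fintype.piFinset fun u => if u ∈ T then ({1, 2} : Finset (Fin 3)) else Finset.univ := by
    ext d
    simp only [Finset.mem_filter, Finset.mem_univ, true_and, Fintype.mem_piFinset]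
    have k : ∀ a : Fin 3, (a ∈ ({1, 2} : Finset (Fin 3))) ↔ a ≠ 0 := by decide
    constructor
    · intro h u
      by_cases hu : u ∈ T
      · rw [if_pos hu, k]; exact h u hu
      · simp [hu]
    · intro h u hu
      have := h u
      rw [if_pos hu, k] at this
      exact this
  rw [h, Fintype.card_piFinset]
  have h2 : ∀ u : Fin n,
      (if u ∈ T then ({1, 2} : Finset (Fin 3)) else Finset.univ).card
        = if u ∈ T then 2 else 3 := by
    intro u; split <;> decide
  rw [Finset.prod_congr rfl (fun u _ => h2 u), Finset.prod_ite,
    Finset.prod_const, Finset.prod_const]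
  congr 1
  · congr 1
    have h3 : Finset.univ.filter (fun u => u ∈ T) = T := by ext u; simp
    rw [h3]
  · congr 1
    have h3 : Finset.univ.filter (fun u => ¬ u ∈ T) = Tᶜ := by ext u; simp
    rw [h3, Finset.card_compl, Fintype.card_fin]

lemma fiber_ge {n : ℕ} {E : Fin n → Fin n → Bool} {T : Finset (Fin n)}
    (hD : DigraphOn n E) (hT : IndTournOn n E T) (hTc : IndTournOn n E Tᶜ) :
    2 ^ T.card * 3 ^ (n - T.card)
      ≤ ((Tset (n+1)).filter fun F => resE n F = E).card := by
  rw [← countD T]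
  apply Finset.card_le_card_of_injOn (extE E)
  · intro d hd
    simp only [Finset.mem_coe, Finset.mem_filter, Finset.mem_univ, true_and] at hd ⊢
    exact ⟨extE_mem hD hT hTc hd, resE_extE E d⟩
  · exact (extE_inj E).injOn

lemma geo {n a : ℕ} (ha : a ≤ n) {c : ℝ}
    (h1 : ((2 ^ a * 3 ^ (n - a) : ℕ) : ℝ) ≤ c)
    (h2 : ((2 ^ (n - a) * 3 ^ a : ℕ) : ℝ) ≤ c) :
    (6 : ℝ) ^ ((n : ℝ) / 2) ≤ c := by
  set r : ℝ := (6 : ℝ) ^ ((n : ℝ) / 2) with hr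
  have hr0 : 0 ≤ r := Real.rpow_nonneg (by norm_num) _
  have hrr : r * r = 6 ^ n := by
    rw [hr, ← Real.rpow_add (by norm_num : (0:ℝ) < 6)]
    rw [(by ring : (n : ℝ) / 2 + (n : ℝ) / 2 = (n : ℝ)), Real.rpow_natCast]
  have hxy : ((2 ^ a * 3 ^ (n - a) : ℕ) : ℝ) * ((2 ^ (n - a) * 3 ^ a : ℕ) : ℝ)
      = 6 ^ n := by
    push_cast
    rw [(by ring : ((2:ℝ) ^ a * 3 ^ (n - a)) * (2 ^ (n - a) * 3 ^ a)
        = (2 ^ a * 2 ^ (n - a)) * (3 ^ a * 3 ^ (n - a))),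
      ← pow_add, ← pow_add, Nat.add_sub_cancel' ha,
      (by norm_num : (6:ℝ) = 2 * 3), mul_pow]
  by_contra hcon
  push_neg at hcon
  have hx0 : (0:ℝ) ≤ ((2 ^ a * 3 ^ (n - a) : ℕ) : ℝ) := Nat.cast_nonneg _
  have hy0 : (0:ℝ) ≤ ((2 ^ (n - a) * 3 ^ a : ℕ) : ℝ) := Nat.cast_nonneg _
  nlinarith [hrr, hxy, h1, h2, hcon, hx0, hy0, hr0]


/-- `|T(n+1)| ≥ 6^{n/2} · |T(n)|`. -/
theorem Tcard_succ_ge :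
    ∀ n : ℕ, (6 : ℝ) ^ ((n : ℝ) / 2) * ((Tset n).card : ℝ) ≤ ((Tset (n + 1)).card : ℝ) := by
  intro n
  have hcard : (Tset (n+1)).card
      = ∑ E ∈ Tset n, ((Tset (n+1)).filter fun F => resE n F = E).card :=
    Finset.card_eq_sum_card_fiberwise (fun F hF => resE_mem hF)
  have hptw : ∀ E ∈ Tset n, (6:ℝ) ^ ((n : ℝ) / 2)
      ≤ (((Tset (n+1)).filter fun F => resE n F = E).card : ℝ) := by
    intro E hE
    simp only [Tset, Finset.mem_filter, Finset.mem_univ, true_and] at hE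
    obtain ⟨hD, S, hS, hSc⟩ := hE
    have hScc : IndTournOn n E Sᶜᶜ := by rw [compl_compl]; exact hS
    have b1 := fiber_ge hD hS hSc
    have b2 := fiber_ge hD hSc hScc
    have haS : S.card ≤ n := by
      have := Finset.card_le_univ S
      simpa using this
    have hcS : Sᶜ.card = n - S.card := by
      rw [Finset.card_compl, Fintype.card_fin]
    rw [hcS, (by omega : n - (n - S.card) = S.card)] at b2
    refine geo haS ?_ ?_
    · exact le_trans (Nat.cast_le.mpr b1) (le_refl _)
    · exact le_trans (Nat.cast_le.mpr b2) (le_refl _)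
  calc (6 : ℝ) ^ ((n : ℝ) / 2) * ((Tset n).card : ℝ)
      = ∑ _E ∈ Tset n, (6:ℝ) ^ ((n : ℝ) / 2) := by
        rw [Finset.sum_const, nsmul_eq_mul, mul_comm]
    _ ≤ ∑ E ∈ Tset n, (((Tset (n+1)).filter fun F => resE n F = E).card : ℝ) :=
        Finset.sum_le_sum hptw
    _ = ((Tset (n+1)).card : ℝ) := by rw [hcard]; push_cast; ring
end

section
/- For all sufficiently large n, |A(n)| ≤ 2^{n + (log₂ n)² + log₂ n − 1}·|F(n−1)|; equivalently, log₂(|A(n)|/|F(n−1)|) ≤ n + (log₂ n)² + log₂ n − 1. -/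
open scoped Classical

lemma kl_fact : ∀ k : ℕ, 11 ≤ k → (k+2) * 2^(2*k+3) ≤ Nat.factorial (k+1) := by
  intro k hk
  induction k, hk using Nat.le_induction with
  | base => norm_num [Nat.factorial]
  | succ k hk ih =>
    have h1 : 4*(k+3) ≤ (k+2)*(k+2) := by nlinarith
    calc (k+1+2) * 2^(2*(k+1)+3) = (4*(k+3)) * 2^(2*k+3) := by ring
      _ ≤ ((k+2)*(k+2)) * 2^(2*k+3) := Nat.mul_le_mul_right _ h1
      _ = (k+2) * ((k+2) * 2^(2*k+3)) := by ring
      _ ≤ (k+2) * Nat.factorial (k+1) := Nat.mul_le_mul_left _ ih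
      _ = Nat.factorial (k+1+1) := (Nat.factorial_succ _).symm

lemma two_pow_big : ∀ k : ℕ, 3 ≤ k → 2*k + 2 ≤ 2^k := by
  intro k hk
  induction k, hk using Nat.le_induction with
  | base => norm_num
  | succ k hk ih =>
    have : 2^(k+1) = 2 * 2^k := by ring
    omega

lemma choose_mono_left {n i m : ℕ} (h : i ≤ m) (hm : m ≤ n/2) :
    n.choose i ≤ n.choose m := by
  induction h using Nat.decreasingInduction with
  | self => rfl
  | of_succ j hj ih =>
    exact (Nat.choose_le_succ_of_lt_half_left (lt_of_lt_of_le hj hm)).trans ih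

lemma keybound {n k : ℕ} (hk : 11 ≤ k) (h1 : 2^k ≤ n) (h2 : n < 2^(k+1)) :
    n * ∑ i ∈ Finset.range (k+2), n.choose i ≤ 2^(k^2+k-1) := by
  have hk3 : 3 ≤ k := by omega
  have h2k : 2*(k+1) ≤ n := le_trans (by have := two_pow_big k hk3; omega) h1
  have hhalf : k + 1 ≤ n / 2 := by omega
  have hsum : ∑ i ∈ Finset.range (k+2), n.choose i ≤ (k+2) * n.choose (k+1) := by
    calc ∑ i ∈ Finset.range (k+2), n.choose i
        ≤ ∑ _i ∈ Finset.range (k+2), n.choose (k+1) := by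
          refine Finset.sum_le_sum fun i hi => ?_
          exact choose_mono_left (by simpa using Nat.lt_succ_iff.mp (Finset.mem_range.mp hi)) hhalf
      _ = (k+2) * n.choose (k+1) := by simp [Finset.sum_const, Finset.card_range, mul_comm]
  have key : n * ((k+2) * n.choose (k+1)) ≤ 2^(k^2+k-1) := by
    have hfpos : 0 < Nat.factorial (k+1) := Nat.factorial_pos _
    refine Nat.le_of_mul_le_mul_right ?_ hfpos
    have hdesc : n.choose (k+1) * Nat.factorial (k+1) ≤ n^(k+1) := by
      have := Nat.descFactorial_eq_factorial_mul_choose n (k+1)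
      calc n.choose (k+1) * Nat.factorial (k+1) = n.descFactorial (k+1) := by rw [this]; ring
        _ ≤ n^(k+1) := Nat.descFactorial_le_pow _ _
    have hnle : n ≤ 2^(k+1) := le_of_lt h2
    have hpow : n^(k+1) ≤ (2^(k+1))^(k+1) := Nat.pow_le_pow_left hnle _
    have hexp : (k+1) + (k+1)*(k+1) = (2*k+3) + (k^2+k-1) := by
      have h1 : 1 ≤ k^2 + k := le_trans (by omega : 1 ≤ k) (Nat.le_add_left k _)
      zify [h1]
      ring
    calc n * ((k+2) * n.choose (k+1)) * Nat.factorial (k+1)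
        = n * ((k+2) * (n.choose (k+1) * Nat.factorial (k+1))) := by ring
      _ ≤ 2^(k+1) * ((k+2) * n^(k+1)) :=
          Nat.mul_le_mul hnle (Nat.mul_le_mul_left _ hdesc)
      _ ≤ 2^(k+1) * ((k+2) * (2^(k+1))^(k+1)) :=
          Nat.mul_le_mul_left _ (Nat.mul_le_mul_left _ hpow)
      _ = (k+2) * (2^(k+1) * (2^(k+1))^(k+1)) := by ring
      _ = ((k+2) * 2^(2*k+3)) * 2^(k^2+k-1) := by
          rw [← pow_mul, ← pow_add, hexp, pow_add 2 (2*k+3) (k^2+k-1)]; ring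
      _ ≤ Nat.factorial (k+1) * 2^(k^2+k-1) := Nat.mul_le_mul_right _ (kl_fact k hk)
      _ = 2^(k^2+k-1) * Nat.factorial (k+1) := by ring
  calc n * ∑ i ∈ Finset.range (k+2), n.choose i
      ≤ n * ((k+2) * n.choose (k+1)) := Nat.mul_le_mul_left _ hsum
    _ ≤ 2^(k^2+k-1) := key

lemma Aset_card_le_step (m : ℕ) :
    (Aset (m+1)).card ≤
      (m+1) * ((∑ i ∈ Finset.range (Nat.log 2 (m+1) + 2), (m+1).choose i) *
        (2^(m+1) * (Fset m).card)) := by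
  classical
  set k := Nat.log 2 (m+1) with hkdef
  set Zsets : Finset (Finset (Fin (m+1))) :=
    (Finset.range (k+2)).biUnion (fun i => Finset.powersetCard i Finset.univ) with hZdef
  have hvchoice : ∀ E : Fin (m+1) → Fin (m+1) → Bool, E ∈ Aset (m+1) →
      ∃ v, (DeltaOn (m+1) E v).card ≤ k := fun E hE => (Finset.mem_filter.mp hE).2
  set vch : (Fin (m+1) → Fin (m+1) → Bool) → Fin (m+1) := fun E =>
    if h : ∃ v, (DeltaOn (m+1) E v).card ≤ k then h.choose else 0 with hvch
  have hvspec : ∀ E ∈ Aset (m+1), (DeltaOn (m+1) E (vch E)).card ≤ k := by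
    intro E hE
    have hex := hvchoice E hE
    simp only [hvch, dif_pos hex]
    exact hex.choose_spec
  have hFmem : ∀ E ∈ Aset (m+1), DigraphOn (m+1) E ∧ I3FreeOn (m+1) E := by
    intro E hE
    exact (Finset.mem_filter.mp (Finset.mem_filter.mp hE).1).2
  set f : (Fin (m+1) → Fin (m+1) → Bool) →
      Fin (m+1) × Finset (Fin (m+1)) × (Fin (m+1) → Bool) × (Fin m → Fin m → Bool) :=
    fun E => (vch E, insert (vch E) (DeltaOn (m+1) E (vch E)),
      fun x => E (vch E) x,
      fun i j => E ((vch E).succAbove i) ((vch E).succAbove j)) with hf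
  have hcard : (Aset (m+1)).card ≤
      ((Finset.univ : Finset (Fin (m+1))) ×ˢ Zsets ×ˢ
        (Finset.univ : Finset (Fin (m+1) → Bool)) ×ˢ Fset m).card := by
    apply Finset.card_le_card_of_injOn f
    · intro E hE
      have hDG := (hFmem E hE).1
      have hI3 := (hFmem E hE).2
      simp only [hf, Finset.mem_coe, Finset.mem_product, Finset.mem_univ, true_and]
      refine ⟨?_, ?_⟩
      · -- Z ∈ Zsets
        rw [hZdef]
        apply Finset.mem_biUnion.mpr
        refine ⟨(insert (vch E) (DeltaOn (m+1) E (vch E))).card, ?_, ?_⟩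
        · apply Finset.mem_range.mpr
          have h1 := Finset.card_insert_le (vch E) (DeltaOn (m+1) E (vch E))
          have h2 := hvspec E hE
          omega
        · exact Finset.mem_powersetCard.mpr ⟨Finset.subset_univ _, rfl⟩
      · -- E' ∈ Fset m
        apply Finset.mem_filter.mpr
        refine ⟨Finset.mem_univ _, ⟨fun i => hDG.1 _, fun i j h => hDG.2 _ _ h⟩, ?_⟩
        intro i j l hij hjl hil
        exact hI3 _ _ _
          (fun h => hij (Fin.succAbove_right_injective h))
          (fun h => hjl (Fin.succAbove_right_injective h))
          (fun h => hil (Fin.succAbove_right_injective h))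
    · intro E1 hE1 E2 hE2 heq
      simp only [Finset.mem_coe] at hE1 hE2
      have hD1 := (hFmem E1 hE1).1
      have hD2 := (hFmem E2 hE2).1
      have h1 : vch E1 = vch E2 := congrArg Prod.fst heq
      set v := vch E1 with hv
      have hZ12 : insert v (DeltaOn (m+1) E1 v) = insert v (DeltaOn (m+1) E2 v) := by
        have := congrArg (fun p => p.2.1) heq
        simpa only [hf, ← h1] using this
      have hb12 : ∀ x, E1 v x = E2 v x := by
        intro x
        have := congrFun (congrArg (fun p => p.2.2.1) heq) x
        simpa only [hf, ← h1] using this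
      have hE12 : ∀ i j, E1 (v.succAbove i) (v.succAbove j) = E2 (v.succAbove i) (v.succAbove j) := by
        intro i j
        have := congrFun (congrFun (congrArg (fun p => p.2.2.2) heq) i) j
        simpa only [hf, ← h1] using this
      funext x y
      by_cases hx : x = v
      · subst hx; exact hb12 y
      · by_cases hy : y = v
        · subst hy
          -- x ≠ v (named hx : ¬ x = v now); reconstruct E x v
          have hmemiff : x ∈ DeltaOn (m+1) E1 v ↔ x ∈ DeltaOn (m+1) E2 v := by
            constructor <;> intro hmem
            · have h2 : x ∈ insert v (DeltaOn (m+1) E2 v) := hZ12 ▸ Finset.mem_insert_of_mem hmem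
              exact (Finset.mem_insert.mp h2).resolve_left hx
            · have h2 : x ∈ insert v (DeltaOn (m+1) E1 v) := hZ12 ▸ Finset.mem_insert_of_mem hmem
              exact (Finset.mem_insert.mp h2).resolve_left hx
          by_cases hmem : x ∈ DeltaOn (m+1) E1 v
          · have n1 : NadjOn (m+1) E1 x v := by
              simpa [DeltaOn] using hmem
            have n2 : NadjOn (m+1) E2 x v := by
              simpa [DeltaOn] using hmemiff.mp hmem
            rw [n1.2.1, n2.2.1]
          · have hmem2 : x ∉ DeltaOn (m+1) E2 v := fun h => hmem (hmemiff.mpr h)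
            have hn1 : ¬ NadjOn (m+1) E1 x v := by
              simpa [DeltaOn] using hmem
            have hn2 : ¬ NadjOn (m+1) E2 x v := by
              simpa [DeltaOn] using hmem2
            have hbx := hb12 x
            cases hcase : E1 v x with
            | true =>
              rw [hD1.2 v x hcase, hD2.2 v x (hbx ▸ hcase)]
            | false =>
              have e2 : E2 v x = false := hbx ▸ hcase
              have t1 : E1 x v = true := by
                by_contra h
                exact hn1 ⟨hx, Bool.eq_false_iff.mpr (fun h' => h h'), hcase⟩
              have t2 : E2 x v = true := by
                by_contra h
                exact hn2 ⟨hx, Bool.eq_false_iff.mpr (fun h' => h h'), e2⟩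
              rw [t1, t2]
        · obtain ⟨i, hi⟩ := Fin.exists_succAbove_eq (show x ≠ v from hx)
          obtain ⟨j, hj⟩ := Fin.exists_succAbove_eq (show y ≠ v from hy)
          rw [← hi, ← hj]
          exact hE12 i j
  have hZcard : Zsets.card ≤ ∑ i ∈ Finset.range (k+2), (m+1).choose i := by
    refine (Finset.card_biUnion_le).trans ?_
    apply Finset.sum_le_sum
    intro i _
    rw [Finset.card_powersetCard, Finset.card_univ, Fintype.card_fin]
  calc (Aset (m+1)).card
      ≤ ((Finset.univ : Finset (Fin (m+1))) ×ˢ Zsets ×ˢ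
        (Finset.univ : Finset (Fin (m+1) → Bool)) ×ˢ Fset m).card := hcard
    _ = (m+1) * (Zsets.card * (2^(m+1) * (Fset m).card)) := by
        simp [Finset.card_product, Finset.card_univ, Fintype.card_fun]
    _ ≤ (m+1) * ((∑ i ∈ Finset.range (k+2), (m+1).choose i) * (2^(m+1) * (Fset m).card)) := by
        exact Nat.mul_le_mul_left _ (Nat.mul_le_mul_right _ hZcard)

/-- For sufficiently large `n`,
`|A(n)| ≤ 2^(n + (log₂ n)² + log₂ n − 1) · |F(n−1)|`. -/
theorem Acard_le :
    ∃ N : ℕ, ∀ n : ℕ, N ≤ n →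
      ((Aset n).card : ℝ) ≤
        (2 : ℝ) ^ ((n : ℝ) + (Nat.log 2 n : ℝ) ^ 2 + (Nat.log 2 n : ℝ) - 1) *
          ((Fset (n - 1)).card : ℝ) := by
  refine ⟨2048, fun n hn => ?_⟩
  obtain ⟨m, rfl⟩ : ∃ m, n = m + 1 := ⟨n - 1, by omega⟩
  set k := Nat.log 2 (m+1) with hkdef
  have hk11 : 11 ≤ k := by
    have h2048 : (2:ℕ)^11 ≤ m+1 := by norm_num; omega
    exact (Nat.le_log_iff_pow_le (by norm_num) (by omega)).mpr h2048
  have h1 : 2^k ≤ m+1 := Nat.pow_log_le_self 2 (by omega)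
  have h2 : m+1 < 2^(k+1) := Nat.lt_pow_succ_log_self (by norm_num) _
  have hkey := keybound hk11 h1 h2
  have h1k : 1 ≤ k^2 + k := le_trans (by omega : 1 ≤ k) (Nat.le_add_left k _)
  have hnat : (Aset (m+1)).card ≤ 2^(m + k^2 + k) * (Fset m).card := by
    calc (Aset (m+1)).card
        ≤ (m+1) * ((∑ i ∈ Finset.range (k+2), (m+1).choose i) *
            (2^(m+1) * (Fset m).card)) := Aset_card_le_step m
      _ = ((m+1) * ∑ i ∈ Finset.range (k+2), (m+1).choose i) *
            2^(m+1) * (Fset m).card := by ring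
      _ ≤ 2^(k^2+k-1) * 2^(m+1) * (Fset m).card :=
          Nat.mul_le_mul_right _ (Nat.mul_le_mul_right _ hkey)
      _ = 2^((k^2+k-1) + (m+1)) * (Fset m).card := by rw [pow_add 2 (k^2+k-1) (m+1)]
      _ = 2^(m + k^2 + k) * (Fset m).card := by
          congr 1
          congr 1
          omega
  have hrw : (2:ℝ) ^ ((((m+1):ℕ):ℝ) + (k:ℝ)^2 + (k:ℝ) - 1) = ((2^(m + k^2 + k) : ℕ) : ℝ) := by
    rw [show (((m+1):ℕ):ℝ) + (k:ℝ)^2 + (k:ℝ) - 1 = ((m + k^2 + k : ℕ):ℝ) by push_cast; ring]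
    rw [Real.rpow_natCast]
    push_cast
    ring
  have hred : (m + 1) - 1 = m := by omega
  rw [hred, hrw]
  calc ((Aset (m+1)).card : ℝ)
      ≤ ((2^(m + k^2 + k) * (Fset m).card : ℕ) : ℝ) := Nat.cast_le.mpr hnat
    _ = ((2^(m + k^2 + k) : ℕ) : ℝ) * ((Fset m).card : ℝ) := by push_cast; ring
end

section
/- Let α = log₂ 3 and β = (1+α)/2 + (1−α)/10⁶. For all sufficiently large n, |B(n)| ≤ 2^{β·n·log₂ n + n + (3/2)(log₂ n)² − (1/2)·log₂ n}·|F(n − ⌊log₂ n⌋)|. -/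
open scoped Classical

-- helpers
lemma enc_inj : ∀ a b c d : Bool, (a = true → b = false) → (c = true → d = false) →
    ((if a then (0:Fin 3) else if b then 1 else 2) = (if c then 0 else if d then 1 else 2)) →
    a = c ∧ b = d := by decide

lemma rev_eq : ∀ a b c d : Bool, (a = true → b = false) → (c = true → d = false) →
    (a = true ∨ b = true) → (c = true ∨ d = true) → a = c → b = d := by decide

lemma related_of_not_mem {n : ℕ} {E : Fin n → Fin n → Bool} {Q D : Finset (Fin n)}
    (hD : DeltaSetOn n E Q = D) {x y : Fin n} (hx : x ∈ Q) (hy : y ∉ Q) (hyD : y ∉ D) :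
    E x y = true ∨ E y x = true := by
  by_contra h
  push_neg at h
  obtain ⟨h1, h2⟩ := h
  apply hyD
  rw [← hD]
  simp only [DeltaSetOn, Finset.mem_sdiff, Finset.mem_biUnion]
  refine ⟨⟨x, hx, ?_⟩, hy⟩
  simp only [DeltaOn, Finset.mem_filter, Finset.mem_univ, true_and]
  exact ⟨fun hxy => hy (hxy ▸ hx), Bool.not_eq_true _ ▸ h2, Bool.not_eq_true _ ▸ h1⟩

/-- the per-(Q,D) class counting lemma -/
lemma card_BQD_le (n k : ℕ) (Q D : Finset (Fin n)) (hQ : Q.card = k) :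
    ((Fset n).filter (fun E => DeltaSetOn n E Q = D ∧ IndTournOn n E Q)).card ≤
      2 ^ (((Q ×ˢ Q).filter (fun p => p.1 < p.2)).card)
        * 3 ^ ((Q ×ˢ D).card)
        * 2 ^ ((Q ×ˢ (Finset.univ \ (Q ∪ D))).card)
        * (Fset (n - k)).card := by
  classical
  set c1 : Finset (Fin n × Fin n) := (Q ×ˢ Q).filter (fun p => p.1 < p.2) with hc1
  set c2 : Finset (Fin n × Fin n) := Q ×ˢ D with hc2
  set c3 : Finset (Fin n × Fin n) := Q ×ˢ (Finset.univ \ (Q ∪ D)) with hc3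
  have hcompl : Qᶜ.card = n - k := by
    rw [Finset.card_compl, hQ, Fintype.card_fin]
  set emb := Qᶜ.orderEmbOfFin hcompl with hemb
  have hembmem : ∀ i, emb i ∉ Q := by
    intro i
    have : emb i ∈ Qᶜ := by
      have := Finset.range_orderEmbOfFin Qᶜ hcompl
      have : emb i ∈ Set.range ⇑(Qᶜ.orderEmbOfFin hcompl) := ⟨i, rfl⟩
      rw [Finset.range_orderEmbOfFin] at this
      exact this
    simpa using this
  have hembsurj : ∀ x : Fin n, x ∉ Q → ∃ i, emb i = x := by
    intro x hx
    have : x ∈ Qᶜ := by simpa using hx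
    have : x ∈ Set.range ⇑(Qᶜ.orderEmbOfFin hcompl) := by
      rw [Finset.range_orderEmbOfFin]; exact_mod_cast this
    exact this
  -- the encoding map
  set Φ : (Fin n → Fin n → Bool) →
      ((({p // p ∈ c1} → Bool) × ({p // p ∈ c2} → Fin 3) × ({p // p ∈ c3} → Bool))
        × (Fin (n-k) → Fin (n-k) → Bool)) :=
    fun E => ((fun p => E p.1.1 p.1.2,
               fun p => if E p.1.1 p.1.2 then 0 else if E p.1.2 p.1.1 then 1 else 2,
               fun p => E p.1.1 p.1.2),
              fun i j => E (emb i) (emb j)) with hΦ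
  have hmaps : ∀ E ∈ (Fset n).filter (fun E => DeltaSetOn n E Q = D ∧ IndTournOn n E Q),
      Φ E ∈ (Finset.univ : Finset (({p // p ∈ c1} → Bool) × ({p // p ∈ c2} → Fin 3) ×
          ({p // p ∈ c3} → Bool))) ×ˢ Fset (n-k) := by
    intro E hE
    simp only [Finset.mem_filter, Fset, Finset.mem_univ, true_and] at hE
    obtain ⟨⟨hdig, hi3⟩, _, _⟩ := hE
    simp only [Finset.mem_product, Finset.mem_univ, true_and]
    simp only [Fset, Finset.mem_filter, Finset.mem_univ, true_and]
    constructor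
    · exact ⟨fun x => hdig.1 _, fun x y h => hdig.2 _ _ h⟩
    · intro x y z hxy hyz hxz
      exact hi3 _ _ _ (fun h => hxy (emb.injective h)) (fun h => hyz (emb.injective h))
        (fun h => hxz (emb.injective h))
  have hinj : Set.InjOn Φ ((Fset n).filter
      (fun E => DeltaSetOn n E Q = D ∧ IndTournOn n E Q)) := by
    intro E1 hE1 E2 hE2 heq
    simp only [Finset.coe_filter, Set.mem_setOf_eq, Fset, Finset.mem_filter,
      Finset.mem_univ, true_and] at hE1 hE2
    obtain ⟨⟨hdig1, _⟩, hD1, ht1⟩ := hE1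
    obtain ⟨⟨hdig2, _⟩, hD2, ht2⟩ := hE2
    have h1 := congrArg (fun z => z.1.1) heq
    have h2 := congrArg (fun z => z.1.2.1) heq
    have h3 := congrArg (fun z => z.1.2.2) heq
    have h4 := congrArg (fun z => z.2) heq
    simp only [hΦ] at h1 h2 h3 h4
    funext x y
    by_cases hxy : x = y
    · subst hxy; rw [hdig1.1, hdig2.1]
    by_cases hx : x ∈ Q <;> by_cases hy : y ∈ Q
    · -- both in Q
      rcases lt_or_gt_of_ne (show x ≠ y from hxy) with hlt | hlt
      · have hm : (x, y) ∈ c1 := by simp [hc1, Finset.mem_product, hx, hy, hlt]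
        exact congrFun h1 ⟨(x,y), hm⟩
      · have hm : (y, x) ∈ c1 := by simp [hc1, Finset.mem_product, hx, hy, hlt]
        have hfwd : E1 y x = E2 y x := congrFun h1 ⟨(y,x), hm⟩
        exact rev_eq _ _ _ _ (hdig1.2 y x) (hdig2.2 y x)
          (ht1 y hy x hx (Ne.symm hxy)) (ht2 y hy x hx (Ne.symm hxy)) hfwd
    · -- x ∈ Q, y ∉ Q
      by_cases hyD : y ∈ D
      · have hm : (x, y) ∈ c2 := by simp [hc2, Finset.mem_product, hx, hyD]
        have := congrFun h2 ⟨(x,y), hm⟩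
        exact (enc_inj _ _ _ _ (hdig1.2 x y) (hdig2.2 x y) this).1
      · have hm : (x, y) ∈ c3 := by simp [hc3, Finset.mem_product, hx, hy, hyD]
        exact congrFun h3 ⟨(x,y), hm⟩
    · -- x ∉ Q, y ∈ Q
      by_cases hxD : x ∈ D
      · have hm : (y, x) ∈ c2 := by simp [hc2, Finset.mem_product, hy, hxD]
        have := congrFun h2 ⟨(y,x), hm⟩
        exact (enc_inj _ _ _ _ (hdig1.2 y x) (hdig2.2 y x) this).2
      · have hm : (y, x) ∈ c3 := by simp [hc3, Finset.mem_product, hy, hx, hxD]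
        have hfwd : E1 y x = E2 y x := congrFun h3 ⟨(y,x), hm⟩
        exact rev_eq _ _ _ _ (hdig1.2 y x) (hdig2.2 y x)
          (related_of_not_mem hD1 hy hx hxD) (related_of_not_mem hD2 hy hx hxD) hfwd
    · -- both outside Q
      obtain ⟨i, hi⟩ := hembsurj x hx
      obtain ⟨j, hj⟩ := hembsurj y hy
      have := congrFun (congrFun h4 i) j
      rw [hi, hj] at this
      exact this
  have hcard := Finset.card_le_card_of_injOn Φ hmaps hinj
  calc ((Fset n).filter (fun E => DeltaSetOn n E Q = D ∧ IndTournOn n E Q)).card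
      ≤ _ := hcard
    _ = 2 ^ c1.card * 3 ^ c2.card * 2 ^ c3.card * (Fset (n - k)).card := by
        rw [Finset.card_product, Finset.card_univ]
        rw [Fintype.card_prod, Fintype.card_prod, Fintype.card_fun, Fintype.card_fun,
          Fintype.card_fun, Fintype.card_coe, Fintype.card_coe, Fintype.card_coe,
          Fintype.card_bool, Fintype.card_fin]
        ring

lemma one_le_alpha : (1:ℝ) ≤ Real.logb 2 3 := by
  rw [show (1:ℝ) = Real.logb 2 2 from (Real.logb_self_eq_one (by norm_num)).symm]
  exact Real.logb_le_logb_of_le (by norm_num) (by norm_num) (by norm_num)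

lemma stepC (n k : ℕ) (Q D : Finset (Fin n)) (hQ : Q.card = k) (hdisj : Disjoint Q D)
    (hd : (D.card : ℝ) ≤ (1/2 - 1/10^6) * n) :
    ((((Fset n).filter (fun E => DeltaSetOn n E Q = D ∧ IndTournOn n E Q)).card : ℝ)) ≤
      (2:ℝ) ^ ((k:ℝ)*k + (k:ℝ)*((n:ℝ)-(k:ℝ))
          + (Real.logb 2 3 - 1)*(1/2 - 1/10^6)*(k:ℝ)*(n:ℝ)) * ((Fset (n-k)).card : ℝ) := by
  classical
  set d := D.card with hdd
  have hc1 : ((Q ×ˢ Q).filter (fun p => p.1 < p.2)).card ≤ k * k := by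
    calc ((Q ×ˢ Q).filter (fun p => p.1 < p.2)).card ≤ (Q ×ˢ Q).card :=
          Finset.card_filter_le _ _
      _ = k * k := by rw [Finset.card_product, hQ]
  have hc2 : (Q ×ˢ D).card = k * d := by rw [Finset.card_product, hQ]
  have hkd : k + d ≤ n := by
    have := Finset.card_le_univ (Q ∪ D)
    rw [Finset.card_union_of_disjoint hdisj, hQ, Fintype.card_fin] at this
    exact this
  have hc3 : (Q ×ˢ (Finset.univ \ (Q ∪ D))).card = k * (n - (k + d)) := by
    rw [Finset.card_product, hQ, Finset.card_sdiff_of_subset (Finset.subset_univ _),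
      Finset.card_univ, Fintype.card_fin, Finset.card_union_of_disjoint hdisj, hQ]
  have h2 : (((Fset n).filter (fun E => DeltaSetOn n E Q = D ∧ IndTournOn n E Q)).card) ≤
      2 ^ (k * k) * 3 ^ (k * d) * 2 ^ (k * (n - (k + d))) * (Fset (n - k)).card := by
    refine le_trans (card_BQD_le n k Q D hQ) ?_
    rw [hc2, hc3]
    exact Nat.mul_le_mul_right _ (Nat.mul_le_mul_right _ (Nat.mul_le_mul_right _
      (Nat.pow_le_pow_right (by norm_num) hc1)))
  have h3 : (((Fset n).filter (fun E => DeltaSetOn n E Q = D ∧ IndTournOn n E Q)).card : ℝ) ≤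
      (2:ℝ) ^ ((k*k : ℕ) : ℝ) * (3:ℝ) ^ ((k*d : ℕ) : ℝ) * (2:ℝ) ^ ((k*(n-(k+d)) : ℕ) : ℝ)
        * ((Fset (n-k)).card : ℝ) := by
    rw [Real.rpow_natCast, Real.rpow_natCast, Real.rpow_natCast]
    exact_mod_cast h2
  have h33 : (3:ℝ) ^ ((k*d : ℕ) : ℝ) = (2:ℝ) ^ (Real.logb 2 3 * ((k*d : ℕ) : ℝ)) := by
    rw [Real.rpow_mul (by norm_num), Real.rpow_logb (by norm_num) (by norm_num) (by norm_num)]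
  rw [h33, ← Real.rpow_add (by norm_num), ← Real.rpow_add (by norm_num)] at h3
  refine le_trans h3 (mul_le_mul_of_nonneg_right ?_ (by positivity))
  apply Real.rpow_le_rpow_of_exponent_le (by norm_num)
  have hc : ((k*(n-(k+d)) : ℕ) : ℝ) = (k:ℝ) * ((n:ℝ) - ((k:ℝ) + (d:ℝ))) := by
    push_cast [Nat.cast_sub hkd]; ring
  rw [hc]
  push_cast
  have hk0 : (0:ℝ) ≤ (k:ℝ) := Nat.cast_nonneg _
  have hα := one_le_alpha
  have hint : (Real.logb 2 3 - 1) * (k:ℝ) * (d:ℝ)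
      ≤ (Real.logb 2 3 - 1) * (k:ℝ) * ((1/2 - 1/10^6) * n) := by
    have h0 : (0:ℝ) ≤ (Real.logb 2 3 - 1) * (k:ℝ) := mul_nonneg (by linarith) hk0
    exact mul_le_mul_of_nonneg_left hd h0
  nlinarith [hint]

lemma cover (n : ℕ) : Bset n ⊆
    (((Finset.univ.powersetCard (Nat.log 2 n)) ×ˢ (Finset.univ : Finset (Finset (Fin n)))).filter
      (fun p => Disjoint p.1 p.2 ∧ ((p.2.card : ℝ) ≤ (1/2 - 1/10^6) * n))).biUnion
    (fun p => (Fset n).filter (fun E => DeltaSetOn n E p.1 = p.2 ∧ IndTournOn n E p.1)) := by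
  intro E hE
  simp only [Bset, Finset.mem_filter, Finset.mem_sdiff] at hE
  obtain ⟨⟨hF, _⟩, v, Q, hQsub, hQcard, hDcard⟩ := hE
  have hFprop : DigraphOn n E ∧ I3FreeOn n E := by
    simpa [Fset] using hF
  rw [Finset.mem_biUnion]
  refine ⟨(Q, DeltaSetOn n E Q), ?_, ?_⟩
  · exact Finset.mem_filter.mpr ⟨Finset.mem_product.mpr
      ⟨Finset.mem_powersetCard_univ.mpr hQcard, Finset.mem_univ _⟩,
      Finset.sdiff_disjoint.symm, hDcard⟩
  · refine Finset.mem_filter.mpr ⟨hF, rfl, ?_⟩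
    intro x hx y hy hxy
    have hxv := (Finset.mem_filter.mp (hQsub hx)).2
    have hyv := (Finset.mem_filter.mp (hQsub hy)).2
    obtain ⟨hxne, hxv1, hxv2⟩ := hxv
    obtain ⟨hyne, hyv1, hyv2⟩ := hyv
    rcases hFprop.2 x v y hxne (fun h => hyne h.symm) hxy with h|h|h|h|h|h
    · simp [hxv1] at h
    · simp [hxv2] at h
    · simp [hyv2] at h
    · simp [hyv1] at h
    · exact Or.inl h
    · exact Or.inr h


/-- For sufficiently large `n`, with `α = log₂ 3` and `β = (1+α)/2 + (1−α)/10⁶`,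
`|B(n)| ≤ 2^(β·n·log₂ n + n + (3/2)(log₂ n)² − (1/2)·log₂ n) · |F(n − ⌊log₂ n⌋)|`. -/
theorem Bcard_le :
    ∃ N : ℕ, ∀ n : ℕ, N ≤ n →
      ((Bset n).card : ℝ) ≤
        (2 : ℝ) ^ (((1 + Real.logb 2 3) / 2 + (1 - Real.logb 2 3) / 10 ^ 6) *
              (n : ℝ) * (Nat.log 2 n : ℝ) +
            (n : ℝ) + (3 / 2) * (Nat.log 2 n : ℝ) ^ 2 - (1 / 2) * (Nat.log 2 n : ℝ)) *
          ((Fset (n - Nat.log 2 n)).card : ℝ) := by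
  classical
  refine ⟨8, fun n hn => ?_⟩
  set k := Nat.log 2 n with hk
  have hk3 : 3 ≤ k := by
    have := (Nat.le_log_iff_pow_le (b := 2) (by norm_num) (x := 3) (y := n) (by omega)).mpr
      (by norm_num; omega)
    exact this
  have hkr : (3:ℝ) ≤ (k:ℝ) := by exact_mod_cast hk3
  set α := Real.logb 2 3 with hα
  set index := ((Finset.univ.powersetCard k) ×ˢ (Finset.univ : Finset (Finset (Fin n)))).filter
      (fun p => Disjoint p.1 p.2 ∧ ((p.2.card : ℝ) ≤ (1/2 - 1/10^6) * n)) with hindex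
  set B : ℝ := (k:ℝ)*k + (k:ℝ)*((n:ℝ)-(k:ℝ)) + (α - 1)*(1/2 - 1/10^6)*(k:ℝ)*(n:ℝ) with hB
  set A : ℝ := (k:ℝ)*((k:ℝ)+1) + (n:ℝ) with hA
  set M : ℝ := (2:ℝ) ^ B * ((Fset (n-k)).card : ℝ) with hM
  have h1 : ((Bset n).card : ℝ) ≤
      ∑ p ∈ index, (((Fset n).filter
        (fun E => DeltaSetOn n E p.1 = p.2 ∧ IndTournOn n E p.1)).card : ℝ) := by
    have hc := Finset.card_le_card (cover n)
    have hb := Finset.card_biUnion_le (s := index)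
      (t := fun p => (Fset n).filter (fun E => DeltaSetOn n E p.1 = p.2 ∧ IndTournOn n E p.1))
    exact_mod_cast le_trans hc hb
  have h3 : ∀ p ∈ index, (((Fset n).filter
      (fun E => DeltaSetOn n E p.1 = p.2 ∧ IndTournOn n E p.1)).card : ℝ) ≤ M := by
    intro p hp
    simp only [hindex, Finset.mem_filter, Finset.mem_product,
      Finset.mem_powersetCard_univ, Finset.mem_univ, and_true, true_and] at hp
    exact stepC n k p.1 p.2 hp.1 hp.2.1 hp.2.2
  have hidxN : index.card ≤ 2 ^ ((k+1)*k + n) := by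
    calc index.card ≤ ((Finset.univ.powersetCard k) ×ˢ
          (Finset.univ : Finset (Finset (Fin n)))).card := Finset.card_filter_le _ _
      _ = n.choose k * 2 ^ n := by
          rw [Finset.card_product, Finset.card_powersetCard, Finset.card_univ,
            Fintype.card_fin, Finset.card_univ, Fintype.card_finset, Fintype.card_fin]
      _ ≤ (2 ^ (k+1)) ^ k * 2 ^ n := by
          refine Nat.mul_le_mul_right _ (le_trans (Nat.choose_le_pow n k) ?_)
          exact Nat.pow_le_pow_left (Nat.le_of_lt (Nat.lt_pow_succ_log_self (by norm_num) n)) k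
      _ = 2 ^ ((k+1)*k + n) := by rw [← pow_mul, ← pow_add]
  have hidx : (index.card : ℝ) ≤ (2:ℝ) ^ A := by
    calc (index.card : ℝ) ≤ ((2 ^ ((k+1)*k + n) : ℕ) : ℝ) := by exact_mod_cast hidxN
      _ = (2:ℝ) ^ (((k+1)*k + n : ℕ) : ℝ) := by rw [Real.rpow_natCast]; push_cast; ring
      _ = (2:ℝ) ^ A := by rw [hA]; push_cast; ring_nf
  have hABT : A + B ≤ ((1 + α) / 2 + (1 - α) / 10 ^ 6) * (n : ℝ) * (k : ℝ) +
      (n : ℝ) + (3 / 2) * (k : ℝ) ^ 2 - (1 / 2) * (k : ℝ) := by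
    have key : (((1 + α) / 2 + (1 - α) / 10 ^ 6) * (n : ℝ) * (k : ℝ) +
        (n : ℝ) + (3 / 2) * (k : ℝ) ^ 2 - (1 / 2) * (k : ℝ)) - (A + B)
        = (k:ℝ)^2/2 - 3/2*(k:ℝ) := by rw [hA, hB]; ring
    nlinarith [key, hkr, mul_le_mul_of_nonneg_right hkr (by linarith : (0:ℝ) ≤ (k:ℝ))]
  calc ((Bset n).card : ℝ)
      ≤ ∑ p ∈ index, (((Fset n).filter
          (fun E => DeltaSetOn n E p.1 = p.2 ∧ IndTournOn n E p.1)).card : ℝ) := h1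
    _ ≤ ∑ _p ∈ index, M := Finset.sum_le_sum h3
    _ = (index.card : ℝ) * M := by rw [Finset.sum_const, nsmul_eq_mul]
    _ ≤ (2:ℝ) ^ A * M := mul_le_mul_of_nonneg_right hidx (by positivity)
    _ = (2:ℝ) ^ (A + B) * ((Fset (n-k)).card : ℝ) := by
        rw [Real.rpow_add (by norm_num : (0:ℝ) < 2) A B, hM, mul_assoc]
    _ ≤ _ := mul_le_mul_of_nonneg_right
        (Real.rpow_le_rpow_of_exponent_le (by norm_num) hABT) (Nat.cast_nonneg _)
end

section
/- Let α = log₂ 3 and γ = 1 + 4/10⁶ + 3/100 + α·(1 − 2/10⁶ − 2/100). For all sufficiently large n, |C(n)| ≤ 2^{γ·n + 2(log₂ n)² + 2·log₂ n}·|F(n−2)|. -/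
open scoped Classical

namespace CcardAux

open Finset

variable {n : ℕ}

lemma mem_Fset_iff {Γ : Fin n → Fin n → Bool} :
    Γ ∈ Fset n ↔ DigraphOn n Γ ∧ I3FreeOn n Γ := by
  simp [Fset]

lemma mem_DeltaOn {E : Fin n → Fin n → Bool} {w v : Fin n} :
    w ∈ DeltaOn n E v ↔ NadjOn n E w v := by
  simp [DeltaOn]

lemma mem_DeltaSetOn {E : Fin n → Fin n → Bool} {Q : Finset (Fin n)} {w : Fin n} :
    w ∈ DeltaSetOn n E Q ↔ (∃ q ∈ Q, NadjOn n E w q) ∧ w ∉ Q := by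
  simp [DeltaSetOn, mem_DeltaOn]

lemma self_not_mem_DeltaOn {E : Fin n → Fin n → Bool} {v : Fin n} :
    v ∉ DeltaOn n E v := by
  simp [mem_DeltaOn, NadjOn]

lemma force {Γ : Fin n → Fin n → Bool} (hF : Γ ∈ Fset n) {v w : Fin n} {Q : Finset (Fin n)}
    (hQ : Q ⊆ DeltaOn n Γ v) (hw : w ∈ DeltaSetOn n Γ Q) (hwv : w ≠ v) :
    Γ w v = true ∨ Γ v w = true := by
  obtain ⟨⟨q, hqQ, hwq⟩, -⟩ := mem_DeltaSetOn.1 hw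
  have hqv : NadjOn n Γ q v := mem_DeltaOn.1 (hQ hqQ)
  have hI3 := (mem_Fset_iff.1 hF).2 w q v hwq.1 hqv.1 hwv
  rcases hI3 with h | h | h | h | h | h
  · rw [hwq.2.1] at h; exact absurd h (by simp)
  · rw [hwq.2.2] at h; exact absurd h (by simp)
  · rw [hqv.2.1] at h; exact absurd h (by simp)
  · rw [hqv.2.2] at h; exact absurd h (by simp)
  · exact Or.inl h
  · exact Or.inr h

lemma cover {Γ : Fin n → Fin n → Bool} (hF : Γ ∈ Fset n) {x y w : Fin n}
    (hnadj : NadjOn n Γ x y) (hwx : w ≠ x) (hwy : w ≠ y) :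
    Γ x w = true ∨ Γ w x = true ∨ Γ y w = true ∨ Γ w y = true := by
  have hI3 := (mem_Fset_iff.1 hF).2 x w y hwx.symm hwy hnadj.1
  rcases hI3 with h | h | h | h | h | h
  · exact Or.inl h
  · exact Or.inr (Or.inl h)
  · exact Or.inr (Or.inr (Or.inr h))
  · exact Or.inr (Or.inr (Or.inl h))
  · rw [hnadj.2.1] at h; exact absurd h (by simp)
  · rw [hnadj.2.2] at h; exact absurd h (by simp)

lemma two_le_of_ne {x y : Fin n} (hxy : x ≠ y) : 2 ≤ n := by
  have h1 := x.2
  have h2 := y.2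
  have h3 : x.1 ≠ y.1 := fun h => hxy (Fin.ext h)
  omega

lemma card_pairCompl (x y : Fin n) (hxy : x ≠ y) :
    (({x, y} : Finset (Fin n))ᶜ).card = n - 2 := by
  rw [Finset.card_compl, Finset.card_insert_of_notMem (by simp [hxy]),
    Finset.card_singleton, Fintype.card_fin]

noncomputable def emb (x y : Fin n) (hxy : x ≠ y) : Fin (n - 2) → Fin n :=
  fun k => ((({x, y} : Finset (Fin n))ᶜ).orderIsoOfFin (card_pairCompl x y hxy) k : Fin n)

lemma emb_mem (x y : Fin n) (hxy : x ≠ y) (k : Fin (n - 2)) :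
    emb x y hxy k ∈ (({x, y} : Finset (Fin n))ᶜ) :=
  ((({x, y} : Finset (Fin n))ᶜ).orderIsoOfFin (card_pairCompl x y hxy) k).2

lemma emb_ne (x y : Fin n) (hxy : x ≠ y) (k : Fin (n - 2)) :
    emb x y hxy k ≠ x ∧ emb x y hxy k ≠ y := by
  have := emb_mem x y hxy k
  simp only [Finset.mem_compl, Finset.mem_insert, Finset.mem_singleton] at this
  push_neg at this
  exact this

lemma emb_inj (x y : Fin n) (hxy : x ≠ y) : Function.Injective (emb x y hxy) := by
  intro a b h
  exact (Finset.orderIsoOfFin _ (card_pairCompl x y hxy)).injective (Subtype.ext h)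

lemma emb_surj (x y : Fin n) (hxy : x ≠ y) (u : Fin n) (hux : u ≠ x) (huy : u ≠ y) :
    ∃ a, emb x y hxy a = u := by
  have hu : u ∈ (({x, y} : Finset (Fin n))ᶜ) := by
    simp [Finset.mem_compl, hux, huy]
  refine ⟨(Finset.orderIsoOfFin _ (card_pairCompl x y hxy)).symm ⟨u, hu⟩, ?_⟩
  simp [emb]

noncomputable def resf (x y : Fin n) (hxy : x ≠ y) (Γ : Fin n → Fin n → Bool) :
    Fin (n - 2) → Fin (n - 2) → Bool :=
  fun a b => Γ (emb x y hxy a) (emb x y hxy b)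

lemma resf_mem_Fset {x y : Fin n} (hxy : x ≠ y) {Γ : Fin n → Fin n → Bool}
    (hΓ : Γ ∈ Fset n) : resf x y hxy Γ ∈ Fset (n - 2) := by
  obtain ⟨hD, hI⟩ := mem_Fset_iff.1 hΓ
  refine mem_Fset_iff.2 ⟨⟨fun a => hD.1 _, fun a b h => hD.2 _ _ h⟩, ?_⟩
  intro a b c hab hbc hac
  exact hI _ _ _ (fun h => hab (emb_inj x y hxy h)) (fun h => hbc (emb_inj x y hxy h))
    (fun h => hac (emb_inj x y hxy h))



noncomputable def sxSet (x y : Fin n) (hxy : x ≠ y) (Q : Finset (Fin n))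
    (D : Fin (n - 2) → Fin (n - 2) → Bool) : Finset (Fin n) :=
  Finset.univ.filter fun w => w ≠ x ∧ w ≠ y ∧ w ∉ Q ∧
    ∃ a b : Fin (n - 2), emb x y hxy a = w ∧ emb x y hxy b ∈ Q ∧ a ≠ b ∧
      D a b = false ∧ D b a = false

lemma mem_sxSet_ne {x y : Fin n} {hxy : x ≠ y} {Q : Finset (Fin n)}
    {D : Fin (n - 2) → Fin (n - 2) → Bool} {w : Fin n} (hw : w ∈ sxSet x y hxy Q D) :
    w ≠ x ∧ w ≠ y := by
  have := (Finset.mem_filter.1 hw).2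
  exact ⟨this.1, this.2.1⟩

lemma sxSet_coherent {x y : Fin n} (hxy : x ≠ y) {Q : Finset (Fin n)}
    (hx : x ∉ Q) (hy : y ∉ Q) (Γ : Fin n → Fin n → Bool) :
    sxSet x y hxy Q (resf x y hxy Γ) = DeltaSetOn n Γ Q \ {x, y} := by
  ext w
  simp only [sxSet, Finset.mem_filter, Finset.mem_univ, true_and, Finset.mem_sdiff,
    mem_DeltaSetOn, Finset.mem_insert, Finset.mem_singleton]
  constructor
  · rintro ⟨hwx, hwy, hwQ, a, b, ha, hb, hab, h1, h2⟩
    refine ⟨⟨⟨emb x y hxy b, hb, ?_, ?_, ?_⟩, hwQ⟩, ?_⟩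
    · rw [← ha]; exact fun h => hab (emb_inj x y hxy h)
    · rw [← ha]; exact h1
    · rw [← ha]; exact h2
    · push_neg; exact ⟨hwx, hwy⟩
  · rintro ⟨⟨⟨q, hqQ, hnadj⟩, hwQ⟩, hwxy⟩
    push_neg at hwxy
    obtain ⟨a, ha⟩ := emb_surj x y hxy w hwxy.1 hwxy.2
    have hqx : q ≠ x := fun h => hx (h ▸ hqQ)
    have hqy : q ≠ y := fun h => hy (h ▸ hqQ)
    obtain ⟨b, hb⟩ := emb_surj x y hxy q hqx hqy
    refine ⟨hwxy.1, hwxy.2, hwQ, a, b, ha, hb ▸ hqQ, ?_, ?_, ?_⟩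
    · rintro rfl; exact hnadj.1 (ha ▸ hb)
    · show Γ (emb x y hxy a) (emb x y hxy b) = false
      rw [ha, hb]; exact hnadj.2.1
    · show Γ (emb x y hxy b) (emb x y hxy a) = false
      rw [ha, hb]; exact hnadj.2.2

def optSet (fx fy : Bool) : Finset (Bool × Bool × Bool × Bool) :=
  Finset.univ.filter fun p =>
    (p.1 = false ∨ p.2.1 = false) ∧ (p.2.2.1 = false ∨ p.2.2.2 = false) ∧
    (p.1 = true ∨ p.2.1 = true ∨ p.2.2.1 = true ∨ p.2.2.2 = true) ∧
    (fx = false ∨ p.1 = true ∨ p.2.1 = true) ∧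
    (fy = false ∨ p.2.2.1 = true ∨ p.2.2.2 = true)

lemma mem_optSet {fx fy : Bool} {p : Bool × Bool × Bool × Bool} :
    p ∈ optSet fx fy ↔
      (p.1 = false ∨ p.2.1 = false) ∧ (p.2.2.1 = false ∨ p.2.2.2 = false) ∧
      (p.1 = true ∨ p.2.1 = true ∨ p.2.2.1 = true ∨ p.2.2.2 = true) ∧
      (fx = false ∨ p.1 = true ∨ p.2.1 = true) ∧
      (fy = false ∨ p.2.2.1 = true ∨ p.2.2.2 = true) := by
  simp [optSet]

lemma card_optSet_tt : (optSet true true).card = 4 := by decide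
lemma card_optSet_tf : (optSet true false).card = 6 := by decide
lemma card_optSet_ft : (optSet false true).card = 6 := by decide
lemma card_optSet_ff : (optSet false false).card = 8 := by decide

noncomputable def Cw (x y : Fin n) (Sx Sy : Finset (Fin n)) (w : Fin n) :
    Finset (Bool × Bool × Bool × Bool) :=
  if w = x ∨ w = y then {(false, false, false, false)}
  else optSet (decide (w ∈ Sx)) (decide (w ∈ Sy))

def extf (x y : Fin n) (Γ : Fin n → Fin n → Bool) : Fin n → Bool × Bool × Bool × Bool :=
  fun w => (Γ x w, Γ w x, Γ y w, Γ w y)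

def Good (n : ℕ) (x y : Fin n) (Qx Qy : Finset (Fin n))
    (Γ : Fin n → Fin n → Bool) : Prop :=
  NadjOn n Γ x y ∧
  Qx ⊆ DeltaOn n Γ x ∧ Qy ⊆ DeltaOn n Γ y ∧
  Qx.card = Nat.log 2 n ∧ Qy.card = Nat.log 2 n ∧
  x ∉ Qx ∧ y ∉ Qx ∧ x ∉ Qy ∧ y ∉ Qy ∧
  ((1 / 2 - 1 / 10 ^ 6 : ℝ) * n - 2 ≤ ((DeltaSetOn n Γ Qx \ {x, y}).card : ℝ)) ∧
  ((1 / 2 - 1 / 10 ^ 6 : ℝ) * n - 2 ≤ ((DeltaSetOn n Γ Qy \ {x, y}).card : ℝ)) ∧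
  ((n : ℝ) / 100 - 4 ≤
    (((DeltaSetOn n Γ Qx \ {x, y}) ∩ (DeltaSetOn n Γ Qy \ {x, y})).card : ℝ))



lemma adjust {Γ : Fin n → Fin n → Bool} {v z : Fin n} {Q : Finset (Fin n)}
    (hQ : Q ⊆ DeltaOn n Γ v) (hcard : Q.card = Nat.log 2 n) (hL : 1 ≤ Nat.log 2 n)
    (hdeg : Nat.log 2 n + 1 ≤ (DeltaOn n Γ v).card) :
    ∃ (Q' : Finset (Fin n)) (c : Fin n),
      Q' ⊆ DeltaOn n Γ v ∧ Q'.card = Nat.log 2 n ∧ z ∉ Q' ∧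
      (∀ q ∈ Q, q ≠ z → q ∈ Q') ∧ (∀ q ∈ Q', q ∈ Q ∨ q = c) := by
  by_cases hz : z ∈ Q
  · have hex : ∃ c ∈ DeltaOn n Γ v, c ∉ Q := by
      by_contra h
      push_neg at h
      have hsub : DeltaOn n Γ v ⊆ Q := h
      have := Finset.card_le_card hsub
      omega
    obtain ⟨c, hcD, hcQ⟩ := hex
    refine ⟨insert c (Q.erase z), c, ?_, ?_, ?_, ?_, ?_⟩
    · intro q hq
      rcases Finset.mem_insert.1 hq with rfl | hq'
      · exact hcD
      · exact hQ (Finset.mem_of_mem_erase hq')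
    · rw [Finset.card_insert_of_notMem (fun h => hcQ (Finset.mem_of_mem_erase h)),
        Finset.card_erase_of_mem hz, hcard]
      omega
    · intro h
      rcases Finset.mem_insert.1 h with rfl | h'
      · exact hcQ hz
      · exact (Finset.mem_erase.1 h').1 rfl
    · intro q hq hqz
      exact Finset.mem_insert_of_mem (Finset.mem_erase.2 ⟨hqz, hq⟩)
    · intro q hq
      rcases Finset.mem_insert.1 hq with rfl | hq'
      · exact Or.inr rfl
      · exact Or.inl (Finset.mem_of_mem_erase hq')
  · exact ⟨Q, v, hQ, hcard, hz, fun q hq _ => hq, fun q hq => Or.inl hq⟩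

lemma Cset_sub_Fset {Γ : Fin n → Fin n → Bool} (h : Γ ∈ Cset n) : Γ ∈ Fset n :=
  (Finset.mem_sdiff.1 (Finset.mem_filter.1 h).1).1

lemma exists_good (hn : 2 ≤ n) {Γ : Fin n → Fin n → Bool} (hΓ : Γ ∈ Cset n) :
    ∃ x y Qx Qy, Good n x y Qx Qy Γ := by
  have hmem := Finset.mem_filter.1 hΓ
  have hF : Γ ∈ Fset n := (Finset.mem_sdiff.1 hmem.1).1
  have hAB : Γ ∉ Aset n ∪ Bset n := (Finset.mem_sdiff.1 hmem.1).2
  have hnA : Γ ∉ Aset n := fun h => hAB (Finset.mem_union_left _ h)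
  have hnB : Γ ∉ Bset n := fun h => hAB (Finset.mem_union_right _ h)
  obtain ⟨x, y, hxy, hnadj, Qx, hQxsub, Qy, hQysub, hQxc, hQyc, hint⟩ := hmem.2
  have hL : 1 ≤ Nat.log 2 n := by
    have h2 : Nat.log 2 (2 ^ 1) ≤ Nat.log 2 n := Nat.log_mono_right (by omega)
    rwa [Nat.log_pow (by norm_num)] at h2
  have hdeg : ∀ v : Fin n, Nat.log 2 n + 1 ≤ (DeltaOn n Γ v).card := by
    intro v
    by_contra h
    push_neg at h
    exact hnA (Finset.mem_filter.2 ⟨hF, v, by omega⟩)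
  have hB' : ∀ (v : Fin n) (Q : Finset (Fin n)), Q ⊆ DeltaOn n Γ v →
      Q.card = Nat.log 2 n → (1 / 2 - 1 / 10 ^ 6 : ℝ) * n < ((DeltaSetOn n Γ Q).card : ℝ) := by
    intro v Q hsub hcard
    by_contra h
    push_neg at h
    exact hnB (Finset.mem_filter.2 ⟨Finset.mem_sdiff.2 ⟨hF, hnA⟩, v, Q, hsub, hcard, h⟩)
  obtain ⟨Qx', cx, hQx'sub, hQx'card, hyQx', hQx'in, hQx'out⟩ :=
    adjust (z := y) hQxsub hQxc hL (hdeg x)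
  obtain ⟨Qy', cy, hQy'sub, hQy'card, hxQy', hQy'in, hQy'out⟩ :=
    adjust (z := x) hQysub hQyc hL (hdeg y)
  have hxQx' : x ∉ Qx' := fun h => self_not_mem_DeltaOn (hQx'sub h)
  have hyQy' : y ∉ Qy' := fun h => self_not_mem_DeltaOn (hQy'sub h)
  -- size bounds for the two "forced" sets
  have hsize : ∀ (Q' : Finset (Fin n)), Q' ⊆ DeltaOn n Γ x ∨ Q' ⊆ DeltaOn n Γ y →
      True := fun _ _ => trivial
  have hcard_pair : (({x, y} : Finset (Fin n))).card ≤ 2 := by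
    apply le_trans (Finset.card_insert_le _ _); simp
  have hg6 : ∀ (v : Fin n) (Q' : Finset (Fin n)), Q' ⊆ DeltaOn n Γ v →
      Q'.card = Nat.log 2 n →
      (1 / 2 - 1 / 10 ^ 6 : ℝ) * n - 2 ≤ ((DeltaSetOn n Γ Q' \ {x, y}).card : ℝ) := by
    intro v Q' hsub hcard
    have h1 := hB' v Q' hsub hcard
    have h2 : (DeltaSetOn n Γ Q').card ≤ (DeltaSetOn n Γ Q' \ {x, y}).card + 2 := by
      apply le_trans (Finset.card_le_card_sdiff_add_card (t := ({x, y} : Finset (Fin n))))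
      omega
    have h2' : ((DeltaSetOn n Γ Q').card : ℝ) ≤ ((DeltaSetOn n Γ Q' \ {x, y}).card : ℝ) + 2 := by
      exact_mod_cast h2
    linarith
  -- the intersection bound
  have hforce_x : ∀ w ∈ DeltaSetOn n Γ Qx, w ≠ x → Γ w x = true ∨ Γ x w = true :=
    fun w hw hwx => force hF hQxsub hw hwx
  have hforce_y : ∀ w ∈ DeltaSetOn n Γ Qy, w ≠ y → Γ w y = true ∨ Γ y w = true :=
    fun w hw hwy => force hF hQysub hw hwy
  have hsubint : DeltaSetOn n Γ Qx ∩ DeltaSetOn n Γ Qy ⊆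
      ((DeltaSetOn n Γ Qx' \ {x, y}) ∩ (DeltaSetOn n Γ Qy' \ {x, y})) ∪ {x, y, cx, cy} := by
    intro w hw
    obtain ⟨hwQx, hwQy⟩ := Finset.mem_inter.1 hw
    by_cases hwbad : w ∈ ({x, y, cx, cy} : Finset (Fin n))
    · exact Finset.mem_union_right _ hwbad
    · have hwx : w ≠ x := by intro h; apply hwbad; simp [h]
      have hwy : w ≠ y := by intro h; apply hwbad; simp [h]
      have hwcx : w ≠ cx := by intro h; apply hwbad; simp [h]
      have hwcy : w ≠ cy := by intro h; apply hwbad; simp [h]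
      have hyadj := hforce_y w hwQy hwy
      have hxadj := hforce_x w hwQx hwx
      apply Finset.mem_union_left
      have hmemx : w ∈ DeltaSetOn n Γ Qx' \ {x, y} := by
        obtain ⟨⟨q, hqQx, hwq⟩, hwQxn⟩ := mem_DeltaSetOn.1 hwQx
        have hqy : q ≠ y := by
          rintro rfl
          rcases hyadj with h | h
          · rw [hwq.2.1] at h; exact absurd h (by simp)
          · rw [hwq.2.2] at h; exact absurd h (by simp)
        refine Finset.mem_sdiff.2 ⟨mem_DeltaSetOn.2 ⟨⟨q, hQx'in q hqQx hqy, hwq⟩, ?_⟩, by simp [hwx, hwy]⟩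
        intro hcon
        rcases hQx'out w hcon with h | h
        · exact hwQxn h
        · exact hwcx h
      have hmemy : w ∈ DeltaSetOn n Γ Qy' \ {x, y} := by
        obtain ⟨⟨q, hqQy, hwq⟩, hwQyn⟩ := mem_DeltaSetOn.1 hwQy
        have hqx : q ≠ x := by
          rintro rfl
          rcases hxadj with h | h
          · rw [hwq.2.1] at h; exact absurd h (by simp)
          · rw [hwq.2.2] at h; exact absurd h (by simp)
        refine Finset.mem_sdiff.2 ⟨mem_DeltaSetOn.2 ⟨⟨q, hQy'in q hqQy hqx, hwq⟩, ?_⟩, by simp [hwx, hwy]⟩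
        intro hcon
        rcases hQy'out w hcon with h | h
        · exact hwQyn h
        · exact hwcy h
      exact Finset.mem_inter.2 ⟨hmemx, hmemy⟩
  have hcard4 : (({x, y, cx, cy} : Finset (Fin n))).card ≤ 4 := by
    apply le_trans (Finset.card_insert_le _ _)
    apply Nat.succ_le_succ
    apply le_trans (Finset.card_insert_le _ _)
    apply Nat.succ_le_succ
    apply le_trans (Finset.card_insert_le _ _)
    simp
  have hg8 : (n : ℝ) / 100 - 4 ≤
      ((((DeltaSetOn n Γ Qx' \ {x, y}) ∩ (DeltaSetOn n Γ Qy' \ {x, y}))).card : ℝ) := by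
    have h1 := Finset.card_le_card hsubint
    have h2 := Finset.card_union_le
      ((DeltaSetOn n Γ Qx' \ {x, y}) ∩ (DeltaSetOn n Γ Qy' \ {x, y}))
      ({x, y, cx, cy} : Finset (Fin n))
    have h3 : (DeltaSetOn n Γ Qx ∩ DeltaSetOn n Γ Qy).card ≤
        ((DeltaSetOn n Γ Qx' \ {x, y}) ∩ (DeltaSetOn n Γ Qy' \ {x, y})).card + 4 := by omega
    have h3' : ((DeltaSetOn n Γ Qx ∩ DeltaSetOn n Γ Qy).card : ℝ) ≤
        (((DeltaSetOn n Γ Qx' \ {x, y}) ∩ (DeltaSetOn n Γ Qy' \ {x, y})).card : ℝ) + 4 := by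
      exact_mod_cast h3
    linarith
  exact ⟨x, y, Qx', Qy', hnadj, hQx'sub, hQy'sub, hQx'card, hQy'card,
    hxQx', hyQx', hxQy', hyQy', hg6 x Qx' hQx'sub hQx'card, hg6 y Qy' hQy'sub hQy'card, hg8⟩



lemma alpha_ge : (3 / 2 : ℝ) ≤ Real.logb 2 3 := by
  rw [Real.le_logb_iff_rpow_le one_lt_two (by norm_num)]
  have hx : (0 : ℝ) ≤ (2 : ℝ) ^ ((3 : ℝ) / 2) := Real.rpow_nonneg (by norm_num) _
  have hsq : ((2 : ℝ) ^ ((3 : ℝ) / 2)) ^ (2 : ℕ) = 2 ^ (3 : ℕ) := by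
    rw [← Real.rpow_natCast ((2 : ℝ) ^ ((3 : ℝ) / 2)) 2, ← Real.rpow_mul (by norm_num)]
    norm_num
  nlinarith [hsq]

lemma alpha_le : Real.logb 2 3 ≤ (8 / 5 : ℝ) := by
  rw [Real.logb_le_iff_le_rpow one_lt_two (by norm_num)]
  have hx : (0 : ℝ) ≤ (2 : ℝ) ^ ((8 : ℝ) / 5) := Real.rpow_nonneg (by norm_num) _
  have hp : ((2 : ℝ) ^ ((8 : ℝ) / 5)) ^ (5 : ℕ) = 2 ^ (8 : ℕ) := by
    rw [← Real.rpow_natCast ((2 : ℝ) ^ ((8 : ℝ) / 5)) 5, ← Real.rpow_mul (by norm_num)]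
    norm_num
  by_contra h
  push_neg at h
  have h5 : ((2 : ℝ) ^ ((8 : ℝ) / 5)) ^ (5 : ℕ) < 3 ^ (5 : ℕ) :=
    pow_lt_pow_left₀ h hx (by norm_num)
  rw [hp] at h5
  norm_num at h5

lemma six_eq : (6 : ℝ) = 2 ^ ((1 : ℝ) + Real.logb 2 3) := by
  rw [Real.rpow_add (by norm_num), Real.rpow_one,
    Real.rpow_logb (by norm_num) (by norm_num) (by norm_num)]
  norm_num

lemma prod_bound (x y : Fin n) (hxy : x ≠ y) (Sx Sy : Finset (Fin n))
    (hSxx : x ∉ Sx) (hSxy : y ∉ Sx) (hSyx : x ∉ Sy) (hSyy : y ∉ Sy)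
    (h6 : (1 / 2 - 1 / 10 ^ 6 : ℝ) * n - 2 ≤ (Sx.card : ℝ))
    (h7 : (1 / 2 - 1 / 10 ^ 6 : ℝ) * n - 2 ≤ (Sy.card : ℝ))
    (h8 : (n : ℝ) / 100 - 4 ≤ ((Sx ∩ Sy).card : ℝ)) :
    (∏ w : Fin n, ((Cw x y Sx Sy w).card : ℝ)) ≤
      2 ^ ((1 + 4 / 10 ^ 6 + 3 / 100 +
        Real.logb 2 3 * (1 - 2 / 10 ^ 6 - 2 / 100)) * (n : ℝ) - 3 : ℝ) := by
  have hn2 : 2 ≤ n := two_le_of_ne hxy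
  set α := Real.logb 2 3 with hα
  have hα1 : (3 / 2 : ℝ) ≤ α := alpha_ge
  have hα2 : α ≤ (8 / 5 : ℝ) := alpha_le
  set g : Fin n → ℝ := fun w =>
    if w = x ∨ w = y then 1
    else if w ∈ Sx ∩ Sy then 4 else if w ∈ Sx ∪ Sy then 6 else 8 with hg
  have hfg : ∀ w ∈ Finset.univ, ((Cw x y Sx Sy w).card : ℝ) ≤ g w := by
    intro w _
    by_cases hw : w = x ∨ w = y
    · rw [hg]; simp only [if_pos hw, Cw, if_pos hw, Finset.card_singleton]; norm_num
    · rw [hg]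
      simp only [if_neg hw, Cw]
      rcases hx' : decide (w ∈ Sx) with _ | _ <;> rcases hy' : decide (w ∈ Sy) with _ | _
      · have hx'' : w ∉ Sx := of_decide_eq_false hx'
        have hy'' : w ∉ Sy := of_decide_eq_false hy'
        rw [card_optSet_ff, if_neg (by simp [hx'', hy'']), if_neg (by simp [hx'', hy''])]
        norm_num
      · have hx'' : w ∉ Sx := of_decide_eq_false hx'
        have hy'' : w ∈ Sy := of_decide_eq_true hy'
        rw [card_optSet_ft, if_neg (by simp [hx'']), if_pos (by simp [hy''])]
        norm_num
      · have hx'' : w ∈ Sx := of_decide_eq_true hx'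
        have hy'' : w ∉ Sy := of_decide_eq_false hy'
        rw [card_optSet_tf, if_neg (by simp [hy'']), if_pos (by simp [hx''])]
        norm_num
      · have hx'' : w ∈ Sx := of_decide_eq_true hx'
        have hy'' : w ∈ Sy := of_decide_eq_true hy'
        rw [card_optSet_tt, if_pos (by simp [hx'', hy''])]
        norm_num
  have hstep1 : (∏ w : Fin n, ((Cw x y Sx Sy w).card : ℝ)) ≤ ∏ w : Fin n, g w :=
    Finset.prod_le_prod (fun w _ => by positivity) hfg
  -- compute the product of g
  have hxyU : (Sx ∪ Sy) ⊆ ({x, y} : Finset (Fin n))ᶜ := by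
    intro w hw
    rcases Finset.mem_union.1 hw with h | h
    · simp only [Finset.mem_compl, Finset.mem_insert, Finset.mem_singleton]
      push_neg
      exact ⟨fun he => hSxx (he ▸ h), fun he => hSxy (he ▸ h)⟩
    · simp only [Finset.mem_compl, Finset.mem_insert, Finset.mem_singleton]
      push_neg
      exact ⟨fun he => hSyx (he ▸ h), fun he => hSyy (he ▸ h)⟩
  have hsplit1 : (∏ w : Fin n, g w) =
      (∏ w ∈ ({x, y} : Finset (Fin n)), g w) * ∏ w ∈ ({x, y} : Finset (Fin n))ᶜ, g w :=
    (Finset.prod_mul_prod_compl _ _).symm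
  have hA1 : (∏ w ∈ ({x, y} : Finset (Fin n)), g w) = 1 := by
    apply Finset.prod_eq_one
    intro w hw
    simp only [Finset.mem_insert, Finset.mem_singleton] at hw
    rw [hg]
    simp only [if_pos hw]
  have hcompl : ({x, y} : Finset (Fin n))ᶜ = (Sx ∪ Sy) ∪ (({x, y} : Finset (Fin n))ᶜ \ (Sx ∪ Sy)) :=
    (Finset.union_sdiff_of_subset hxyU).symm
  have hsplit2 : (∏ w ∈ ({x, y} : Finset (Fin n))ᶜ, g w) =
      (∏ w ∈ Sx ∪ Sy, g w) * ∏ w ∈ ({x, y} : Finset (Fin n))ᶜ \ (Sx ∪ Sy), g w := by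
    conv_lhs => rw [hcompl]
    rw [Finset.prod_union Finset.disjoint_sdiff]
  have hsplit3 : (∏ w ∈ Sx ∪ Sy, g w) =
      (∏ w ∈ Sx ∩ Sy, g w) * ∏ w ∈ (Sx ∪ Sy) \ (Sx ∩ Sy), g w := by
    rw [← Finset.prod_union Finset.disjoint_sdiff,
      Finset.union_sdiff_of_subset Finset.inter_subset_union]
  have hne : ∀ w, w ∈ Sx ∪ Sy → ¬(w = x ∨ w = y) := by
    intro w hw h
    have := hxyU hw
    simp only [Finset.mem_compl, Finset.mem_insert, Finset.mem_singleton] at this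
    exact this h
  have hP1 : (∏ w ∈ Sx ∩ Sy, g w) = 4 ^ (Sx ∩ Sy).card := by
    rw [Finset.prod_congr rfl (fun w hw => ?_), Finset.prod_const]
    rw [hg]
    have h1 := hne w (Finset.inter_subset_union hw)
    simp only [if_neg h1, if_pos hw]
  have hP2 : (∏ w ∈ (Sx ∪ Sy) \ (Sx ∩ Sy), g w) = 6 ^ ((Sx ∪ Sy) \ (Sx ∩ Sy)).card := by
    rw [Finset.prod_congr rfl (fun w hw => ?_), Finset.prod_const]
    obtain ⟨hwu, hwn⟩ := Finset.mem_sdiff.1 hw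
    rw [hg]
    simp only [if_neg (hne w hwu), if_neg hwn, if_pos hwu]
  have hP3 : (∏ w ∈ ({x, y} : Finset (Fin n))ᶜ \ (Sx ∪ Sy), g w) =
      8 ^ (({x, y} : Finset (Fin n))ᶜ \ (Sx ∪ Sy)).card := by
    rw [Finset.prod_congr rfl (fun w hw => ?_), Finset.prod_const]
    obtain ⟨hwc, hwu⟩ := Finset.mem_sdiff.1 hw
    have h1 : ¬(w = x ∨ w = y) := by
      have := hwc
      simp only [Finset.mem_compl, Finset.mem_insert, Finset.mem_singleton] at this
      exact this
    have h2 : w ∉ Sx ∩ Sy := fun h => hwu (Finset.inter_subset_union h)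
    rw [hg]
    simp only [if_neg h1, if_neg h2, if_neg hwu]
  -- cardinalities
  set i := (Sx ∩ Sy).card with hi
  set u := (Sx ∪ Sy).card with hu
  have hiu : i ≤ u := Finset.card_le_card Finset.inter_subset_union
  have hcard2 : ((Sx ∪ Sy) \ (Sx ∩ Sy)).card = u - i :=
    Finset.card_sdiff_of_subset Finset.inter_subset_union
  have hcardC : (({x, y} : Finset (Fin n))ᶜ).card = n - 2 := card_pairCompl x y hxy
  have hun : u ≤ n - 2 := hcardC ▸ Finset.card_le_card hxyU
  have hcard3 : (({x, y} : Finset (Fin n))ᶜ \ (Sx ∪ Sy)).card = (n - 2) - u := by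
    rw [Finset.card_sdiff_of_subset hxyU, hcardC]
  have huicard : u + i = Sx.card + Sy.card := Finset.card_union_add_card_inter Sx Sy
  -- assemble
  have hprodg : (∏ w : Fin n, g w) = 4 ^ i * (6 ^ (u - i) * 8 ^ ((n - 2) - u)) := by
    rw [hsplit1, hA1, one_mul, hsplit2, hsplit3, hP1, hP2, hP3, hcard2, hcard3, mul_assoc]
  -- convert to rpow
  have h2pos : (0 : ℝ) < 2 := by norm_num
  have hr4 : (4 : ℝ) ^ i = 2 ^ ((2 : ℝ) * (i : ℝ)) := by
    rw [show (2 : ℝ) * (i : ℝ) = ((2 * i : ℕ) : ℝ) by push_cast; ring,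
      Real.rpow_natCast, pow_mul]
    norm_num
  have hr8 : (8 : ℝ) ^ ((n - 2) - u) = 2 ^ ((3 : ℝ) * (((n - 2) - u : ℕ) : ℝ)) := by
    rw [show (3 : ℝ) * (((n - 2) - u : ℕ) : ℝ) = ((3 * ((n - 2) - u) : ℕ) : ℝ) by push_cast; ring,
      Real.rpow_natCast, pow_mul]
    norm_num
  have hr6 : (6 : ℝ) ^ (u - i) = 2 ^ ((1 + α) * ((u - i : ℕ) : ℝ)) := by
    rw [six_eq, ← Real.rpow_natCast ((2 : ℝ) ^ ((1 : ℝ) + α)) (u - i),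
      ← Real.rpow_mul (by norm_num)]
  have hfinal : (4 : ℝ) ^ i * (6 ^ (u - i) * 8 ^ ((n - 2) - u)) =
      2 ^ ((2 : ℝ) * (i : ℝ) + ((1 + α) * ((u - i : ℕ) : ℝ) + (3 : ℝ) * (((n - 2) - u : ℕ) : ℝ))) := by
    rw [hr4, hr6, hr8, ← Real.rpow_add h2pos, ← Real.rpow_add h2pos]
  -- the exponent inequality
  have hui' : ((u - i : ℕ) : ℝ) = (u : ℝ) - (i : ℝ) := by
    push_cast [Nat.cast_sub hiu]; ring
  have hnu' : (((n - 2) - u : ℕ) : ℝ) = (n : ℝ) - 2 - (u : ℝ) := by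
    have h1 : ((n - 2 - u : ℕ) : ℝ) = ((n - 2 : ℕ) : ℝ) - (u : ℝ) := by
      push_cast [Nat.cast_sub hun]; ring
    rw [h1, Nat.cast_sub hn2]; norm_num
  have hcastui : (u : ℝ) + (i : ℝ) = (Sx.card : ℝ) + (Sy.card : ℝ) := by
    exact_mod_cast huicard
  have hexp : (2 : ℝ) * (i : ℝ) + ((1 + α) * ((u - i : ℕ) : ℝ) + (3 : ℝ) * (((n - 2) - u : ℕ) : ℝ)) ≤
      (1 + 4 / 10 ^ 6 + 3 / 100 + α * (1 - 2 / 10 ^ 6 - 2 / 100)) * (n : ℝ) - 3 := by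
    rw [hui', hnu']
    push_cast
    have hP1' : (0 : ℝ) ≤ (2 - α) * ((u : ℝ) + (i : ℝ) - ((1 - 2 / 10 ^ 6) * (n : ℝ) - 4)) := by
      apply mul_nonneg (by linarith)
      rw [hcastui]; linarith
    have hP2' : (0 : ℝ) ≤ (2 * α - 3) * ((i : ℝ) - ((n : ℝ) / 100 - 4)) := by
      apply mul_nonneg (by linarith)
      have : ((Sx ∩ Sy).card : ℝ) = (i : ℝ) := by rw [hi]
      linarith [h8, this]
    nlinarith [hP1', hP2']
  calc (∏ w : Fin n, ((Cw x y Sx Sy w).card : ℝ)) ≤ ∏ w : Fin n, g w := hstep1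
    _ = 2 ^ ((2 : ℝ) * (i : ℝ) + ((1 + α) * ((u - i : ℕ) : ℝ) + (3 : ℝ) * (((n - 2) - u : ℕ) : ℝ))) := by
        rw [hprodg, hfinal]
    _ ≤ 2 ^ ((1 + 4 / 10 ^ 6 + 3 / 100 + α * (1 - 2 / 10 ^ 6 - 2 / 100)) * (n : ℝ) - 3 : ℝ) :=
        Real.rpow_le_rpow_of_exponent_le (by norm_num) hexp



lemma pertuple (x y : Fin n) (Qx Qy : Finset (Fin n)) :
    (((Cset n).filter (Good n x y Qx Qy)).card : ℝ) ≤
      ((Fset (n - 2)).card : ℝ) *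
        2 ^ ((1 + 4 / 10 ^ 6 + 3 / 100 +
          Real.logb 2 3 * (1 - 2 / 10 ^ 6 - 2 / 100)) * (n : ℝ) - 3 : ℝ) := by
  rcases Finset.eq_empty_or_nonempty ((Cset n).filter (Good n x y Qx Qy)) with he | ⟨Γ₀, hΓ₀⟩
  · rw [he]
    simp only [Finset.card_empty, Nat.cast_zero]
    positivity
  have hG₀ : Good n x y Qx Qy Γ₀ := (Finset.mem_filter.1 hΓ₀).2
  have hxy : x ≠ y := hG₀.1.1
  set B : ℝ := 2 ^ ((1 + 4 / 10 ^ 6 + 3 / 100 +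
    Real.logb 2 3 * (1 - 2 / 10 ^ 6 - 2 / 100)) * (n : ℝ) - 3 : ℝ) with hB
  have hBpos : 0 ≤ B := le_of_lt (Real.rpow_pos_of_pos (by norm_num) _)
  set G := (Cset n).filter (Good n x y Qx Qy) with hGdef
  set Fg := (Fset (n - 2)).filter (fun D =>
      ((1 / 2 - 1 / 10 ^ 6 : ℝ) * n - 2 ≤ ((sxSet x y hxy Qx D).card : ℝ)) ∧
      ((1 / 2 - 1 / 10 ^ 6 : ℝ) * n - 2 ≤ ((sxSet x y hxy Qy D).card : ℝ)) ∧
      ((n : ℝ) / 100 - 4 ≤ (((sxSet x y hxy Qx D) ∩ (sxSet x y hxy Qy D)).card : ℝ))) with hFg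
  have hsub : G ⊆ Fg.biUnion (fun D => G.filter (fun Γ => resf x y hxy Γ = D)) := by
    intro Γ hΓ
    have hGd : Good n x y Qx Qy Γ := (Finset.mem_filter.1 hΓ).2
    have hFΓ : Γ ∈ Fset n := Cset_sub_Fset (Finset.mem_filter.1 hΓ).1
    refine Finset.mem_biUnion.2 ⟨resf x y hxy Γ, ?_, Finset.mem_filter.2 ⟨hΓ, rfl⟩⟩
    rw [hFg]
    refine Finset.mem_filter.2 ⟨resf_mem_Fset hxy hFΓ, ?_, ?_, ?_⟩
    · rw [sxSet_coherent hxy hGd.2.2.2.2.2.1 hGd.2.2.2.2.2.2.1 Γ]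
      exact hGd.2.2.2.2.2.2.2.2.2.1
    · rw [sxSet_coherent hxy hGd.2.2.2.2.2.2.2.1 hGd.2.2.2.2.2.2.2.2.1 Γ]
      exact hGd.2.2.2.2.2.2.2.2.2.2.1
    · rw [sxSet_coherent hxy hGd.2.2.2.2.2.1 hGd.2.2.2.2.2.2.1 Γ,
        sxSet_coherent hxy hGd.2.2.2.2.2.2.2.1 hGd.2.2.2.2.2.2.2.2.1 Γ]
      exact hGd.2.2.2.2.2.2.2.2.2.2.2
  have h1 : G.card ≤ ∑ D ∈ Fg, (G.filter (fun Γ => resf x y hxy Γ = D)).card :=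
    le_trans (Finset.card_le_card hsub) (Finset.card_biUnion_le)
  have h2 : ∀ D ∈ Fg, ((G.filter (fun Γ => resf x y hxy Γ = D)).card : ℝ) ≤ B := by
    intro D hD
    obtain ⟨hDF, hs6, hs7, hs8⟩ := Finset.mem_filter.1 hD
    set Sx := sxSet x y hxy Qx D with hSx
    set Sy := sxSet x y hxy Qy D with hSy
    have hinj : (G.filter (fun Γ => resf x y hxy Γ = D)).card ≤
        ∏ w, (Cw x y Sx Sy w).card := by
      rw [← Fintype.card_piFinset]
      apply Finset.card_le_card_of_injOn (extf x y)
      · -- maps to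
        intro Γ hΓ'
        obtain ⟨hΓG, hres⟩ := Finset.mem_filter.1 hΓ'
        have hGd : Good n x y Qx Qy Γ := (Finset.mem_filter.1 hΓG).2
        have hFΓ : Γ ∈ Fset n := Cset_sub_Fset (Finset.mem_filter.1 hΓG).1
        have hDig : DigraphOn n Γ := (mem_Fset_iff.1 hFΓ).1
        have hcohx : Sx = DeltaSetOn n Γ Qx \ {x, y} := by
          rw [hSx, ← hres, sxSet_coherent hxy hGd.2.2.2.2.2.1 hGd.2.2.2.2.2.2.1 Γ]
        have hcohy : Sy = DeltaSetOn n Γ Qy \ {x, y} := by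
          rw [hSy, ← hres, sxSet_coherent hxy hGd.2.2.2.2.2.2.2.1 hGd.2.2.2.2.2.2.2.2.1 Γ]
        rw [Finset.mem_coe, Fintype.mem_piFinset]
        intro w
        by_cases hw : w = x ∨ w = y
        · rw [Cw, if_pos hw]
          have hnadj := hGd.1
          rcases hw with rfl | rfl
          · simp only [extf, Finset.mem_singleton, hDig.1 w, hnadj.2.1, hnadj.2.2]
          · simp only [extf, Finset.mem_singleton, hDig.1 w, hnadj.2.1, hnadj.2.2]
        · rw [Cw, if_neg hw]
          push_neg at hw
          apply mem_optSet.2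
          refine ⟨?_, ?_, ?_, ?_, ?_⟩
          · rcases Bool.eq_false_or_eq_true (Γ x w) with h | h
            · exact Or.inr (hDig.2 x w h)
            · exact Or.inl h
          · rcases Bool.eq_false_or_eq_true (Γ y w) with h | h
            · exact Or.inr (hDig.2 y w h)
            · exact Or.inl h
          · exact cover hFΓ hGd.1 hw.1 hw.2
          · by_cases hmem : w ∈ Sx
            · have hw' : w ∈ DeltaSetOn n Γ Qx := (Finset.mem_sdiff.1 (hcohx ▸ hmem)).1
              rcases force hFΓ hGd.2.1 hw' hw.1 with h | h
              · exact Or.inr (Or.inr h)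
              · exact Or.inr (Or.inl h)
            · exact Or.inl (decide_eq_false hmem)
          · by_cases hmem : w ∈ Sy
            · have hw' : w ∈ DeltaSetOn n Γ Qy := (Finset.mem_sdiff.1 (hcohy ▸ hmem)).1
              rcases force hFΓ hGd.2.2.1 hw' hw.2 with h | h
              · exact Or.inr (Or.inr h)
              · exact Or.inr (Or.inl h)
            · exact Or.inl (decide_eq_false hmem)
      · -- injective
        intro Γ₁ h1' Γ₂ h2' hee
        have hres1 : resf x y hxy Γ₁ = D := (Finset.mem_filter.1 h1').2
        have hres2 : resf x y hxy Γ₂ = D := (Finset.mem_filter.1 h2').2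
        have hres : resf x y hxy Γ₁ = resf x y hxy Γ₂ := hres1.trans hres2.symm
        funext u v
        by_cases hux : u = x
        · subst hux; exact congrArg (fun p => p.1) (congrFun hee v)
        by_cases huy : u = y
        · subst huy; exact congrArg (fun p => p.2.2.1) (congrFun hee v)
        by_cases hvx : v = x
        · subst hvx; exact congrArg (fun p => p.2.1) (congrFun hee u)
        by_cases hvy : v = y
        · subst hvy; exact congrArg (fun p => p.2.2.2) (congrFun hee u)
        obtain ⟨a, ha⟩ := emb_surj x y hxy u hux huy
        obtain ⟨b, hb⟩ := emb_surj x y hxy v hvx hvy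
        have e1 : Γ₁ u v = resf x y hxy Γ₁ a b := by rw [resf, ha, hb]
        have e2 : Γ₂ u v = resf x y hxy Γ₂ a b := by rw [resf, ha, hb]
        rw [e1, e2, hres]
    have hxSx : x ∉ Sx := fun h => (mem_sxSet_ne h).1 rfl
    have hySx : y ∉ Sx := fun h => (mem_sxSet_ne h).2 rfl
    have hxSy : x ∉ Sy := fun h => (mem_sxSet_ne h).1 rfl
    have hySy : y ∉ Sy := fun h => (mem_sxSet_ne h).2 rfl
    calc ((G.filter (fun Γ => resf x y hxy Γ = D)).card : ℝ)
        ≤ ((∏ w, (Cw x y Sx Sy w).card : ℕ) : ℝ) := by exact_mod_cast hinj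
      _ = ∏ w, ((Cw x y Sx Sy w).card : ℝ) := by push_cast; rfl
      _ ≤ B := prod_bound x y hxy Sx Sy hxSx hySx hxSy hySy hs6 hs7 hs8
  calc (G.card : ℝ) ≤ ((∑ D ∈ Fg, (G.filter (fun Γ => resf x y hxy Γ = D)).card : ℕ) : ℝ) := by
        exact_mod_cast h1
    _ = ∑ D ∈ Fg, ((G.filter (fun Γ => resf x y hxy Γ = D)).card : ℝ) := by push_cast; rfl
    _ ≤ ∑ _D ∈ Fg, B := Finset.sum_le_sum h2
    _ = (Fg.card : ℝ) * B := by rw [Finset.sum_const, nsmul_eq_mul]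
    _ ≤ ((Fset (n - 2)).card : ℝ) * B := by
        apply mul_le_mul_of_nonneg_right _ hBpos
        exact_mod_cast Finset.card_le_card (Finset.filter_subset _ _)



lemma two_pow_le_factorial : ∀ L : ℕ, 4 ≤ L → 2 ^ L ≤ L.factorial := by
  intro L hL
  induction L with
  | zero => omega
  | succ k ih =>
    rcases Nat.lt_or_ge k 4 with h | h
    · interval_cases k
      · omega
      · omega
      · omega
      · decide
    · have h1 := ih (by omega)
      rw [pow_succ, Nat.factorial_succ]
      calc 2 ^ k * 2 ≤ k.factorial * 2 := Nat.mul_le_mul_right _ h1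
        _ ≤ (k + 1) * k.factorial := by rw [mul_comm]; exact Nat.mul_le_mul_right _ (by omega)

lemma count_tuples (hn : 16 ≤ n) :
    n * n * (n.choose (Nat.log 2 n) * n.choose (Nat.log 2 n)) ≤
      2 ^ (2 * (Nat.log 2 n) ^ 2 + 2 * Nat.log 2 n + 3) := by
  set L := Nat.log 2 n with hL
  have hL4 : 4 ≤ L := by
    have h2 : Nat.log 2 (2 ^ 4) ≤ Nat.log 2 n := Nat.log_mono_right (by omega)
    rwa [Nat.log_pow (by norm_num)] at h2
  have hnlt : n < 2 ^ (L + 1) := Nat.lt_pow_succ_log_self (by norm_num) n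
  have hfac : 2 ^ L ≤ L.factorial := two_pow_le_factorial L hL4
  have hchoose : n.choose L * L.factorial ≤ n ^ L := by
    have h1 : L.factorial * n.choose L = n.descFactorial L :=
      (Nat.descFactorial_eq_factorial_mul_choose n L).symm
    calc n.choose L * L.factorial = n.descFactorial L := by rw [mul_comm, h1]
      _ ≤ n ^ L := Nat.descFactorial_le_pow n L
  set X := n.choose L with hX
  have hmain : 2 ^ (2 * L) * (n * n * (X * X)) ≤ 2 ^ (2 * L) * 2 ^ (2 * L ^ 2 + 2 * L + 2) := by
    calc 2 ^ (2 * L) * (n * n * (X * X)) = (n * (X * 2 ^ L)) * (n * (X * 2 ^ L)) := by ring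
      _ ≤ (n * (X * L.factorial)) * (n * (X * L.factorial)) := by
          apply Nat.mul_le_mul <;> exact Nat.mul_le_mul_left _ (Nat.mul_le_mul_left _ hfac)
      _ ≤ (n * n ^ L) * (n * n ^ L) := by
          apply Nat.mul_le_mul <;> exact Nat.mul_le_mul_left _ hchoose
      _ = n ^ (2 * L + 2) := by ring
      _ ≤ (2 ^ (L + 1)) ^ (2 * L + 2) := Nat.pow_le_pow_left (le_of_lt hnlt) _
      _ = 2 ^ (2 * L) * 2 ^ (2 * L ^ 2 + 2 * L + 2) := by
          rw [← pow_mul, ← pow_add]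
          congr 1
          ring
  have h2 : n * n * (X * X) ≤ 2 ^ (2 * L ^ 2 + 2 * L + 2) :=
    Nat.le_of_mul_le_mul_left hmain (Nat.pow_pos (by norm_num))
  calc n * n * (X * X) ≤ 2 ^ (2 * L ^ 2 + 2 * L + 2) := h2
    _ ≤ 2 ^ (2 * L ^ 2 + 2 * L + 3) := Nat.pow_le_pow_right (by norm_num) (by omega)



end CcardAux

/-- For sufficiently large `n`, with `α = log₂ 3` and
`γ = 1 + 4/10⁶ + 3/100 + α·(1 − 2/10⁶ − 2/100)`,
`|C(n)| ≤ 2^(γ·n + 2(log₂ n)² + 2·log₂ n) · |F(n−2)|`. -/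
theorem Ccard_le :
    ∃ N : ℕ, ∀ n : ℕ, N ≤ n →
      ((Cset n).card : ℝ) ≤
        (2 : ℝ) ^ ((1 + 4 / 10 ^ 6 + 3 / 100 +
              Real.logb 2 3 * (1 - 2 / 10 ^ 6 - 2 / 100)) * (n : ℝ) +
            2 * (Nat.log 2 n : ℝ) ^ 2 + 2 * (Nat.log 2 n : ℝ)) *
          ((Fset (n - 2)).card : ℝ) := by
  refine ⟨16, fun n hn => ?_⟩
  classical
  set L := Nat.log 2 n with hL
  set γ : ℝ := 1 + 4 / 10 ^ 6 + 3 / 100 + Real.logb 2 3 * (1 - 2 / 10 ^ 6 - 2 / 100) with hγ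
  set B : ℝ := 2 ^ (γ * (n : ℝ) - 3 : ℝ) with hB
  have hBpos : 0 ≤ B := le_of_lt (Real.rpow_pos_of_pos (by norm_num) _)
  have hFpos : (0 : ℝ) ≤ ((Fset (n - 2)).card : ℝ) := Nat.cast_nonneg _
  set T : Finset ((Fin n × Fin n) × Finset (Fin n) × Finset (Fin n)) :=
    (Finset.univ ×ˢ Finset.univ) ×ˢ
      (Finset.univ.powersetCard L ×ˢ Finset.univ.powersetCard L) with hT
  have hcover : Cset n ⊆
      T.biUnion (fun t => (Cset n).filter (CcardAux.Good n t.1.1 t.1.2 t.2.1 t.2.2)) := by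
    intro Γ hΓ
    obtain ⟨x, y, Qx, Qy, hg⟩ := CcardAux.exists_good (by omega) hΓ
    refine Finset.mem_biUnion.2 ⟨((x, y), (Qx, Qy)), ?_, Finset.mem_filter.2 ⟨hΓ, hg⟩⟩
    rw [hT]
    refine Finset.mem_product.2 ⟨Finset.mem_product.2 ⟨Finset.mem_univ _, Finset.mem_univ _⟩, ?_⟩
    refine Finset.mem_product.2 ⟨?_, ?_⟩
    · exact Finset.mem_powersetCard_univ.2 hg.2.2.2.1
    · exact Finset.mem_powersetCard_univ.2 hg.2.2.2.2.1
  have h1 : (Cset n).card ≤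
      ∑ t ∈ T, ((Cset n).filter (CcardAux.Good n t.1.1 t.1.2 t.2.1 t.2.2)).card :=
    le_trans (Finset.card_le_card hcover) Finset.card_biUnion_le
  have hTcard : T.card = n * n * (n.choose L * n.choose L) := by
    simp [hT, Finset.card_powersetCard]
  have hcount := CcardAux.count_tuples (n := n) hn
  have h2 : ((Cset n).card : ℝ) ≤ (T.card : ℝ) * (((Fset (n - 2)).card : ℝ) * B) := by
    calc ((Cset n).card : ℝ) ≤
        ((∑ t ∈ T, ((Cset n).filter (CcardAux.Good n t.1.1 t.1.2 t.2.1 t.2.2)).card : ℕ) : ℝ) := by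
          exact_mod_cast h1
      _ = ∑ t ∈ T, (((Cset n).filter (CcardAux.Good n t.1.1 t.1.2 t.2.1 t.2.2)).card : ℝ) := by
          push_cast; rfl
      _ ≤ ∑ _t ∈ T, ((Fset (n - 2)).card : ℝ) * B := by
          apply Finset.sum_le_sum
          intro t _
          exact CcardAux.pertuple t.1.1 t.1.2 t.2.1 t.2.2
      _ = (T.card : ℝ) * (((Fset (n - 2)).card : ℝ) * B) := by
          rw [Finset.sum_const, nsmul_eq_mul]
  have h3 : (T.card : ℝ) ≤ ((2 ^ (2 * L ^ 2 + 2 * L + 3) : ℕ) : ℝ) := by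
    rw [hTcard]
    exact_mod_cast hcount
  have h4 : ((Cset n).card : ℝ) ≤
      ((2 ^ (2 * L ^ 2 + 2 * L + 3) : ℕ) : ℝ) * (((Fset (n - 2)).card : ℝ) * B) := by
    apply le_trans h2
    apply mul_le_mul_of_nonneg_right h3
    positivity
  have h5 : ((2 ^ (2 * L ^ 2 + 2 * L + 3) : ℕ) : ℝ) =
      (2 : ℝ) ^ ((2 * (L : ℝ) ^ 2 + 2 * (L : ℝ) + 3) : ℝ) := by
    rw [show ((2 * (L : ℝ) ^ 2 + 2 * (L : ℝ) + 3) : ℝ) = ((2 * L ^ 2 + 2 * L + 3 : ℕ) : ℝ) by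
      push_cast; ring]
    rw [Real.rpow_natCast]
    push_cast
    ring
  calc ((Cset n).card : ℝ) ≤
      ((2 ^ (2 * L ^ 2 + 2 * L + 3) : ℕ) : ℝ) * (((Fset (n - 2)).card : ℝ) * B) := h4
    _ = (2 : ℝ) ^ ((2 * (L : ℝ) ^ 2 + 2 * (L : ℝ) + 3) : ℝ) * B * ((Fset (n - 2)).card : ℝ) := by
        rw [h5]; ring
    _ = (2 : ℝ) ^ (γ * (n : ℝ) + 2 * (L : ℝ) ^ 2 + 2 * (L : ℝ)) * ((Fset (n - 2)).card : ℝ) := by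
        rw [hB, ← Real.rpow_add (by norm_num : (0:ℝ) < 2)]
        congr 1
        ring
end

section
/- There is an N such that for all n ≥ N the following holds. Let Γ be an I₃-free digraph on n vertices such that: (i) every vertex v satisfies |Δ(v)| > ⌊log₂ n⌋; (ii) for every vertex v and every Q ⊆ Δ(v) with |Q| = ⌊log₂ n⌋ one has |Δ(Q)| > (1/2 − 10⁻⁶)·n; and (iii) for all distinct x, y with x ≁ y and all Q_x ⊆ Δ(x), Q_y ⊆ Δ(y) with |Q_x| = |Q_y| = ⌊log₂ n⌋ one has |Δ(Q_x) ∩ Δ(Q_y)| < n/100. Then Γ contains no pinwheel on 5 vertices, i.e., there are no distinct vertices v₀, v₁, v₂, v₃, v₄ with v_i ≁ v_{i+1 (mod 5)} for all i. -/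
open scoped Classical

lemma cycle5_indep (g : Fin 5 → Bool)
    (h : ∀ i : Fin 5, ¬(g i = true ∧ g (i + 1) = true)) :
    (Finset.univ.filter fun i => g i = true).card ≤ 2 := by
  revert h; revert g; decide

/-- For all sufficiently large `n`, an I₃-free digraph on `n` vertices in which
(i) every vertex `v` has `|Δ(v)| > ⌊log₂ n⌋`,
(ii) every `Q ⊆ Δ(v)` with `|Q| = ⌊log₂ n⌋` has `|Δ(Q)| > (1/2 − 10⁻⁶)·n`, and
(iii) whenever `x ≁ y` and `Qx ⊆ Δ(x)`, `Qy ⊆ Δ(y)` have size `⌊log₂ n⌋`,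
`|Δ(Qx) ∩ Δ(Qy)| < n/100`,
contains no pinwheel on 5 vertices. -/
theorem no_pinwheel_5 :
    ∃ N : ℕ, ∀ n : ℕ, N ≤ n → ∀ E : Fin n → Fin n → Bool,
      DigraphOn n E → I3FreeOn n E →
      (∀ v : Fin n, Nat.log 2 n < (DeltaOn n E v).card) →
      (∀ v : Fin n, ∀ Q ⊆ DeltaOn n E v, Q.card = Nat.log 2 n →
        (1 / 2 - 1 / 10 ^ 6 : ℝ) * n < ((DeltaSetOn n E Q).card : ℝ)) →
      (∀ x y : Fin n, x ≠ y → NadjOn n E x y →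
        ∀ Qx ⊆ DeltaOn n E x, ∀ Qy ⊆ DeltaOn n E y,
          Qx.card = Nat.log 2 n → Qy.card = Nat.log 2 n →
          ((DeltaSetOn n E Qx ∩ DeltaSetOn n E Qy).card : ℝ) < (n : ℝ) / 100) →
      ¬ ∃ v : Fin 5 → Fin n, Function.Injective v ∧
          ∀ i : Fin 5, NadjOn n E (v i) (v (i + 1)) := by
  refine ⟨1, fun n hn E _hdig _hI3 hdeg hbig hsmall ⟨v, hinj, hpw⟩ => ?_⟩
  -- choose the sets Q i ⊆ Δ(v i) of size log₂ n
  have hchoose : ∀ i : Fin 5, ∃ Q ⊆ DeltaOn n E (v i), Q.card = Nat.log 2 n :=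
    fun i => Finset.exists_subset_card_eq (le_of_lt (hdeg (v i)))
  choose Q hQsub hQcard using hchoose
  set A : Fin 5 → Finset (Fin n) := fun i => DeltaSetOn n E (Q i) with hA
  -- big sets
  have hAbig : ∀ i : Fin 5, (1 / 2 - 1 / 10 ^ 6 : ℝ) * n < ((A i).card : ℝ) :=
    fun i => hbig (v i) (Q i) (hQsub i) (hQcard i)
  -- small consecutive intersections
  have hAsmall : ∀ i : Fin 5, ((A i ∩ A (i + 1)).card : ℝ) < (n : ℝ) / 100 := by
    intro i
    exact hsmall (v i) (v (i + 1)) ((hpw i).1) (hpw i) (Q i) (hQsub i)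
      (Q (i + 1)) (hQsub (i + 1)) (hQcard i) (hQcard (i + 1))
  -- degree function
  set d : Fin n → ℕ := fun x => (Finset.univ.filter fun i : Fin 5 => x ∈ A i).card with hd
  have hd5 : ∀ x, d x ≤ 5 := by
    intro x
    calc d x ≤ (Finset.univ : Finset (Fin 5)).card := Finset.card_filter_le _ _
    _ = 5 := by simp
  -- double counting: ∑ i, |A i| = ∑ x, d x
  have hsum : ∑ i : Fin 5, (A i).card = ∑ x : Fin n, d x := by
    have h1 : ∀ i : Fin 5, (A i).card = ∑ x : Fin n, (if x ∈ A i then 1 else 0) := by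
      intro i
      rw [← Finset.card_filter]
      congr 1
      exact (Finset.filter_univ_mem (A i)).symm
    have h2 : ∀ x : Fin n, d x = ∑ i : Fin 5, (if x ∈ A i then 1 else 0) := by
      intro x; rw [hd]; exact Finset.card_filter _ _
    simp only [h1, h2]
    exact Finset.sum_comm
  -- T = number of x with d x ≥ 3
  set T : ℕ := (Finset.univ.filter fun x : Fin n => 3 ≤ d x).card with hT
  have hTb : ∑ x : Fin n, d x ≤ 2 * n + 3 * T := by
    have hx : ∀ x : Fin n, d x ≤ 2 + 3 * (if 3 ≤ d x then 1 else 0) := by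
      intro x
      by_cases h : 3 ≤ d x
      · simp only [h, if_true]; have := hd5 x; omega
      · simp only [h, if_false]; omega
    calc ∑ x : Fin n, d x ≤ ∑ x : Fin n, (2 + 3 * (if 3 ≤ d x then 1 else 0)) :=
          Finset.sum_le_sum fun x _ => hx x
      _ = 2 * n + 3 * T := by
          rw [Finset.sum_add_distrib, Finset.sum_const, ← Finset.mul_sum,
            ← Finset.card_filter, ← hT]
          simp [mul_comm]
  -- each x with d x ≥ 3 is in a consecutive intersection
  have hcons : ∀ x : Fin n, 3 ≤ d x → ∃ i : Fin 5, x ∈ A i ∩ A (i + 1) := by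
    intro x hx
    by_contra hcon
    push_neg at hcon
    set g : Fin 5 → Bool := fun i => decide (x ∈ A i) with hg
    have hgood : ∀ i : Fin 5, ¬(g i = true ∧ g (i + 1) = true) := by
      intro i ⟨h1, h2⟩
      rw [hg] at h1 h2
      simp only [decide_eq_true_eq] at h1 h2
      exact hcon i (Finset.mem_inter.mpr ⟨h1, h2⟩)
    have hle := cycle5_indep g hgood
    have heq : (Finset.univ.filter fun i : Fin 5 => x ∈ A i)
        = (Finset.univ.filter fun i => g i = true) := by
      apply Finset.filter_congr
      intro i _
      simp [hg]
    have hx' : 3 ≤ (Finset.univ.filter fun i : Fin 5 => x ∈ A i).card := hx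
    rw [heq] at hx'
    omega
  -- T ≤ ∑ consecutive intersection sizes
  set S2 : ℕ := ∑ i : Fin 5, (A i ∩ A (i + 1)).card with hS2
  have hTS2 : T ≤ S2 := by
    have hsub : (Finset.univ.filter fun x : Fin n => 3 ≤ d x)
        ⊆ Finset.univ.biUnion fun i : Fin 5 => A i ∩ A (i + 1) := by
      intro x hx
      simp only [Finset.mem_filter] at hx
      obtain ⟨i, hi⟩ := hcons x hx.2
      exact Finset.mem_biUnion.mpr ⟨i, Finset.mem_univ i, hi⟩
    calc T ≤ (Finset.univ.biUnion fun i : Fin 5 => A i ∩ A (i + 1)).card :=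
          Finset.card_le_card hsub
      _ ≤ S2 := Finset.card_biUnion_le
  -- real arithmetic
  have hn1 : (1 : ℝ) ≤ (n : ℝ) := by exact_mod_cast hn
  have h1 : (5 : ℝ) * ((1 / 2 - 1 / 10 ^ 6) * n) < ((∑ i : Fin 5, (A i).card : ℕ) : ℝ) := by
    push_cast
    have : (5 : ℝ) * ((1 / 2 - 1 / 10 ^ 6) * n)
        = ∑ _i : Fin 5, ((1 / 2 - 1 / 10 ^ 6 : ℝ) * n) := by
      simp
    rw [this]
    exact Finset.sum_lt_sum_of_nonempty Finset.univ_nonempty fun i _ => hAbig i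
  have h2 : ((S2 : ℕ) : ℝ) < 5 * ((n : ℝ) / 100) := by
    rw [hS2]
    push_cast
    have : (5 : ℝ) * ((n : ℝ) / 100) = ∑ _i : Fin 5, ((n : ℝ) / 100) := by simp
    rw [this]
    exact Finset.sum_lt_sum_of_nonempty Finset.univ_nonempty fun i _ => hAsmall i
  have h3 : ((∑ i : Fin 5, (A i).card : ℕ) : ℝ) ≤ 2 * (n : ℝ) + 3 * (T : ℝ) := by
    have : ∑ i : Fin 5, (A i).card ≤ 2 * n + 3 * T := hsum ▸ hTb
    exact_mod_cast this
  have h4 : (T : ℝ) ≤ ((S2 : ℕ) : ℝ) := by exact_mod_cast hTS2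
  linarith
end

section
/- There is an N such that for all n ≥ N the following holds. Let Γ be an I₃-free digraph on n vertices such that: (i) every vertex v satisfies |Δ(v)| > ⌊log₂ n⌋; (ii) for every vertex v and every Q ⊆ Δ(v) with |Q| = ⌊log₂ n⌋ one has |Δ(Q)| > (1/2 − 10⁻⁶)·n; and (iii) for all distinct x, y with x ≁ y and all Q_x ⊆ Δ(x), Q_y ⊆ Δ(y) with |Q_x| = |Q_y| = ⌊log₂ n⌋ one has |Δ(Q_x) ∩ Δ(Q_y)| < n/100. Then Γ contains no pinwheel on 7 vertices, i.e., there are no distinct vertices v₀,…,v₆ with v_i ≁ v_{i+1 (mod 7)} for all i. -/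
open scoped Classical

lemma step_card {n : ℕ} (A P Q R : Finset (Fin n)) :
    (A ∩ P).card ≤ (A ∩ R).card + ((P ∩ Q).card + ((Q ∪ R)ᶜ).card) := by
  calc (A ∩ P).card ≤ ((A ∩ R) ∪ ((P ∩ Q) ∪ (Q ∪ R)ᶜ)).card := by
        apply Finset.card_le_card
        intro x hx
        simp only [Finset.mem_inter, Finset.mem_union, Finset.mem_compl] at *
        tauto
    _ ≤ (A ∩ R).card + ((P ∩ Q) ∪ (Q ∪ R)ᶜ).card := Finset.card_union_le _ _
    _ ≤ _ := Nat.add_le_add_left (Finset.card_union_le _ _) _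

/-- For all sufficiently large `n`, an I₃-free digraph on `n` vertices in which
(i) every vertex `v` has `|Δ(v)| > ⌊log₂ n⌋`,
(ii) every `Q ⊆ Δ(v)` with `|Q| = ⌊log₂ n⌋` has `|Δ(Q)| > (1/2 − 10⁻⁶)·n`, and
(iii) whenever `x ≁ y` and `Qx ⊆ Δ(x)`, `Qy ⊆ Δ(y)` have size `⌊log₂ n⌋`,
`|Δ(Qx) ∩ Δ(Qy)| < n/100`,
contains no pinwheel on 7 vertices. -/
theorem no_pinwheel_7 :
    ∃ N : ℕ, ∀ n : ℕ, N ≤ n → ∀ E : Fin n → Fin n → Bool,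
      DigraphOn n E → I3FreeOn n E →
      (∀ v : Fin n, Nat.log 2 n < (DeltaOn n E v).card) →
      (∀ v : Fin n, ∀ Q ⊆ DeltaOn n E v, Q.card = Nat.log 2 n →
        (1 / 2 - 1 / 10 ^ 6 : ℝ) * n < ((DeltaSetOn n E Q).card : ℝ)) →
      (∀ x y : Fin n, x ≠ y → NadjOn n E x y →
        ∀ Qx ⊆ DeltaOn n E x, ∀ Qy ⊆ DeltaOn n E y,
          Qx.card = Nat.log 2 n → Qy.card = Nat.log 2 n →
          ((DeltaSetOn n E Qx ∩ DeltaSetOn n E Qy).card : ℝ) < (n : ℝ) / 100) →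
      ¬ ∃ v : Fin 7 → Fin n, Function.Injective v ∧
          ∀ i : Fin 7, NadjOn n E (v i) (v (i + 1)) := by
  use 0
  intro n _ E _hdig _hI3 hdeg hDelta hPair

  rintro ⟨v, hinj, hpin⟩
  have hn : (0:ℝ) < n := by exact_mod_cast (v 0).pos
  have hQ : ∀ i : Fin 7, ∃ Q ⊆ DeltaOn n E (v i), Q.card = Nat.log 2 n :=
    fun i => Finset.exists_subset_card_eq (hdeg (v i)).le
  choose Q hQsub hQcard using hQ
  set D : Fin 7 → Finset (Fin n) := fun i => DeltaSetOn n E (Q i) with hD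
  have h1 : ∀ i, (1/2 - 1/10^6 : ℝ) * n < ((D i).card : ℝ) :=
    fun i => hDelta (v i) (Q i) (hQsub i) (hQcard i)
  have ha : ∀ i : Fin 7, ((D i ∩ D (i+1)).card : ℝ) < (n:ℝ)/100 := fun i =>
    hPair (v i) (v (i+1)) (hpin i).1 (hpin i) (Q i) (hQsub i) (Q (i+1)) (hQsub (i+1))
      (hQcard i) (hQcard (i+1))
  have hcompl : ∀ i : Fin 7, (((D i ∪ D (i+1))ᶜ).card : ℝ)
      = n - (D i).card - ((D (i+1)).card : ℝ) + ((D i ∩ D (i+1)).card : ℝ) := by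
    intro i
    have e1 := Finset.card_add_card_compl (D i ∪ D (i+1))
    have e2 := Finset.card_union_add_card_inter (D i) (D (i+1))
    rw [Fintype.card_fin] at e1
    have e1' : (((D i ∪ D (i+1))).card : ℝ) + (((D i ∪ D (i+1))ᶜ).card : ℝ) = n := by
      exact_mod_cast congrArg (Nat.cast : ℕ → ℝ) e1
    have e2' : (((D i ∪ D (i+1))).card : ℝ) + ((D i ∩ D (i+1)).card : ℝ)
        = ((D i).card : ℝ) + ((D (i+1)).card : ℝ) := by
      exact_mod_cast congrArg (Nat.cast : ℕ → ℝ) e2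
    linarith
  have hstep : ∀ i : Fin 7, ((D 0 ∩ D i).card:ℝ)
      ≤ ((D 0 ∩ D (i+2)).card : ℝ) + (((D i ∩ D (i+1)).card : ℝ)
        + ((((D (i+1) ∪ D (i+2))ᶜ).card : ℝ)) ) := fun i => by
    exact_mod_cast step_card (D 0) (D i) (D (i+1)) (D (i+2))
  have hs0 := hstep 0
  have hs2 := hstep 2
  have hs4 := hstep 4
  have ha0 := ha 0
  have ha1 := ha 1
  have ha2 := ha 2
  have ha3 := ha 3
  have ha4 := ha 4
  have ha5 := ha 5
  have ha6 := ha 6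
  have hc1 := hcompl 1
  have hc3 := hcompl 3
  have hc5 := hcompl 5
  have e01 : (0:Fin 7) + 1 = 1 := by decide
  have e02 : (0:Fin 7) + 2 = 2 := by decide
  have e21 : (2:Fin 7) + 1 = 3 := by decide
  have e22 : (2:Fin 7) + 2 = 4 := by decide
  have e41 : (4:Fin 7) + 1 = 5 := by decide
  have e42 : (4:Fin 7) + 2 = 6 := by decide
  have e11 : (1:Fin 7) + 1 = 2 := by decide
  have e31 : (3:Fin 7) + 1 = 4 := by decide
  have e51 : (5:Fin 7) + 1 = 6 := by decide
  have e61 : (6:Fin 7) + 1 = 0 := by decide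
  rw [e01, e02, Finset.inter_self] at hs0
  rw [e21, e22] at hs2
  rw [e41, e42] at hs4
  rw [e01] at ha0
  rw [e11] at ha1
  rw [e21] at ha2
  rw [e31] at ha3
  rw [e41] at ha4
  rw [e51] at ha5
  rw [e61, Finset.inter_comm] at ha6
  rw [e11] at hc1
  rw [e31] at hc3
  rw [e51] at hc5
  have h10 := h1 0
  have h11 := h1 1
  have h12 := h1 2
  have h13 := h1 3
  have h14 := h1 4
  have h15 := h1 5
  have h16 := h1 6
  linarith
end

section
/- There is an N such that for all n ≥ N the following holds. Let Γ be an I₃-free digraph on n vertices such that: (i) every vertex v satisfies |Δ(v)| > ⌊log₂ n⌋; (ii) for every vertex v and every Q ⊆ Δ(v) with |Q| = ⌊log₂ n⌋ one has |Δ(Q)| > (1/2 − 10⁻⁶)·n; and (iii) for all distinct x, y with x ≁ y and all Q_x ⊆ Δ(x), Q_y ⊆ Δ(y) with |Q_x| = |Q_y| = ⌊log₂ n⌋ one has |Δ(Q_x) ∩ Δ(Q_y)| < n/100. Then Γ contains no pinwheel on 9 vertices, i.e., there are no distinct vertices v₀,…,v₈ with v_i ≁ v_{i+1 (mod 9)}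 for all i. -/
open scoped Classical

variable {n : ℕ}

noncomputable def dd (X Y : Finset (Fin n)) : ℕ := (X \ Y).card + (Y \ X).card

lemma dd_tri (X Y Z : Finset (Fin n)) : dd X Z ≤ dd X Y + dd Y Z := by
  have h1 : (X \ Z).card ≤ (X \ Y).card + (Y \ Z).card :=
    le_trans (Finset.card_le_card (by intro a; simp only [Finset.mem_sdiff, Finset.mem_union]; tauto))
      (Finset.card_union_le (X \ Y) (Y \ Z))
  have h2 : (Z \ X).card ≤ (Z \ Y).card + (Y \ X).card :=
    le_trans (Finset.card_le_card (by intro a; simp only [Finset.mem_sdiff, Finset.mem_union]; tauto))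
      (Finset.card_union_le (Z \ Y) (Y \ X))
  unfold dd; omega

lemma dd_comm (X Y : Finset (Fin n)) : dd X Y = dd Y X := add_comm _ _

lemma dd_self_compl (X : Finset (Fin n)) : dd X Xᶜ = n := by
  unfold dd
  rw [sdiff_compl, inf_idem, sdiff_eq_self_iff_disjoint.2 (disjoint_compl_right)]
  have := Finset.card_add_card_compl X
  simpa using this

lemma dd_step (X Y : Finset (Fin n)) :
    (dd X Yᶜ : ℝ) ≤ 2 * ((X ∩ Y).card : ℝ) + n - X.card - Y.card := by
  unfold dd
  have h1 : X \ Yᶜ = X ∩ Y := by rw [sdiff_compl]; rfl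
  have h2 : Yᶜ \ X = (X ∪ Y)ᶜ := by
    ext a; simp only [Finset.mem_sdiff, Finset.mem_compl, Finset.mem_union]; tauto
  rw [h1, h2, Finset.card_compl, Fintype.card_fin]
  have h3 : (X ∪ Y).card + (X ∩ Y).card = X.card + Y.card :=
    Finset.card_union_add_card_inter X Y
  have h4 : (X ∪ Y).card ≤ n := by
    simpa using Finset.card_le_univ (X ∪ Y)
  have h3' : ((X ∪ Y).card : ℝ) + ((X ∩ Y).card : ℝ) = (X.card : ℝ) + Y.card := by
    exact_mod_cast h3
  rw [Nat.cast_add, Nat.cast_sub h4]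
  linarith

lemma dd_compl (X Y : Finset (Fin n)) : dd Xᶜ Yᶜ = dd X Y := by
  unfold dd
  have h1 : Xᶜ \ Yᶜ = Y \ X := by
    ext a; simp only [Finset.mem_sdiff, Finset.mem_compl]; tauto
  have h2 : Yᶜ \ Xᶜ = X \ Y := by
    ext a; simp only [Finset.mem_sdiff, Finset.mem_compl]; tauto
  rw [h1, h2]; omega


/-- For all sufficiently large `n`, an I₃-free digraph on `n` vertices in which
(i) every vertex `v` has `|Δ(v)| > ⌊log₂ n⌋`,
(ii) every `Q ⊆ Δ(v)` with `|Q| = ⌊log₂ n⌋` has `|Δ(Q)| > (1/2 − 10⁻⁶)·n`, and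
(iii) whenever `x ≁ y` and `Qx ⊆ Δ(x)`, `Qy ⊆ Δ(y)` have size `⌊log₂ n⌋`,
`|Δ(Qx) ∩ Δ(Qy)| < n/100`,
contains no pinwheel on 9 vertices. -/


theorem no_pinwheel_9 :
    ∃ N : ℕ, ∀ n : ℕ, N ≤ n → ∀ E : Fin n → Fin n → Bool,
      DigraphOn n E → I3FreeOn n E →
      (∀ v : Fin n, Nat.log 2 n < (DeltaOn n E v).card) →
      (∀ v : Fin n, ∀ Q ⊆ DeltaOn n E v, Q.card = Nat.log 2 n →
        (1 / 2 - 1 / 10 ^ 6 : ℝ) * n < ((DeltaSetOn n E Q).card : ℝ)) →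
      (∀ x y : Fin n, x ≠ y → NadjOn n E x y →
        ∀ Qx ⊆ DeltaOn n E x, ∀ Qy ⊆ DeltaOn n E y,
          Qx.card = Nat.log 2 n → Qy.card = Nat.log 2 n →
          ((DeltaSetOn n E Qx ∩ DeltaSetOn n E Qy).card : ℝ) < (n : ℝ) / 100) →
      ¬ ∃ v : Fin 9 → Fin n, Function.Injective v ∧
          ∀ i : Fin 9, NadjOn n E (v i) (v (i + 1)) := by
  refine ⟨1, fun n hn E hdig hI3 h1 h2 h3 => ?_⟩
  rintro ⟨v, hinj, hpin⟩
  -- choose the sets Q i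
  choose Q hQsub hQcard using fun i : Fin 9 =>
    Finset.exists_subset_card_eq (le_of_lt (h1 (v i)))
  set A : Fin 9 → Finset (Fin n) := fun i => DeltaSetOn n E (Q i) with hA
  have hAcard : ∀ i, (1 / 2 - 1 / 10 ^ 6 : ℝ) * n < ((A i).card : ℝ) :=
    fun i => h2 (v i) (Q i) (hQsub i) (hQcard i)
  have hInt : ∀ i : Fin 9, ((A i ∩ A (i + 1)).card : ℝ) < (n : ℝ) / 100 :=
    fun i => h3 (v i) (v (i + 1)) (hpin i).1 (hpin i) (Q i) (hQsub i)
      (Q (i + 1)) (hQsub (i + 1)) (hQcard i) (hQcard (i + 1))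
  -- the step bounds
  have step1 : ∀ i : Fin 9, (dd (A i) ((A (i + 1))ᶜ) : ℝ) < 2.0002 / 100 * n := by
    intro i
    have := dd_step (A i) (A (i + 1))
    have := hAcard i; have := hAcard (i + 1); have := hInt i
    linarith
  have step2 : ∀ i : Fin 9, (dd ((A i)ᶜ) (A (i + 1)) : ℝ) < 2.0002 / 100 * n := by
    intro i
    have e : dd ((A i)ᶜ) (A (i + 1)) = dd (A (i + 1)) ((A i)ᶜ) := dd_comm _ _
    have hb := dd_step (A (i + 1)) (A i)
    have e2 : A (i + 1) ∩ A i = A i ∩ A (i + 1) := Finset.inter_comm _ _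
    rw [e2] at hb
    have := hAcard i; have := hAcard (i + 1); have := hInt i
    rw [e]; linarith
  -- extract and normalize indices
  have s0 := step1 0; have s1 := step2 1; have s2 := step1 2; have s3 := step2 3
  have s4 := step1 4; have s5 := step2 5; have s6 := step1 6; have s7 := step2 7
  have s8 := step1 8
  have e0 : (0 : Fin 9) + 1 = 1 := by decide
  have e1 : (1 : Fin 9) + 1 = 2 := by decide
  have e2 : (2 : Fin 9) + 1 = 3 := by decide
  have e3 : (3 : Fin 9) + 1 = 4 := by decide
  have e4 : (4 : Fin 9) + 1 = 5 := by decide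
  have e5 : (5 : Fin 9) + 1 = 6 := by decide
  have e6 : (6 : Fin 9) + 1 = 7 := by decide
  have e7 : (7 : Fin 9) + 1 = 8 := by decide
  have e8 : (8 : Fin 9) + 1 = 0 := by decide
  rw [e0] at s0; rw [e1] at s1; rw [e2] at s2; rw [e3] at s3; rw [e4] at s4
  rw [e5] at s5; rw [e6] at s6; rw [e7] at s7; rw [e8] at s8
  -- triangle chain : A 0, (A 1)ᶜ, A 2, (A 3)ᶜ, A 4, (A 5)ᶜ, A 6, (A 7)ᶜ, A 8, (A 0)ᶜ
  have t1 := dd_tri (A 0) ((A 1)ᶜ) ((A 0)ᶜ)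
  have t2 := dd_tri ((A 1)ᶜ) (A 2) ((A 0)ᶜ)
  have t3 := dd_tri (A 2) ((A 3)ᶜ) ((A 0)ᶜ)
  have t4 := dd_tri ((A 3)ᶜ) (A 4) ((A 0)ᶜ)
  have t5 := dd_tri (A 4) ((A 5)ᶜ) ((A 0)ᶜ)
  have t6 := dd_tri ((A 5)ᶜ) (A 6) ((A 0)ᶜ)
  have t7 := dd_tri (A 6) ((A 7)ᶜ) ((A 0)ᶜ)
  have t8 := dd_tri ((A 7)ᶜ) (A 8) ((A 0)ᶜ)
  have total : dd (A 0) ((A 0)ᶜ) ≤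
      dd (A 0) ((A 1)ᶜ) + dd ((A 1)ᶜ) (A 2) + dd (A 2) ((A 3)ᶜ) + dd ((A 3)ᶜ) (A 4) +
      dd (A 4) ((A 5)ᶜ) + dd ((A 5)ᶜ) (A 6) + dd (A 6) ((A 7)ᶜ) + dd ((A 7)ᶜ) (A 8) +
      dd (A 8) ((A 0)ᶜ) := by omega
  have hself : dd (A 0) ((A 0)ᶜ) = n := dd_self_compl _
  have totalR : (n : ℝ) ≤
      (dd (A 0) ((A 1)ᶜ) : ℝ) + dd ((A 1)ᶜ) (A 2) + dd (A 2) ((A 3)ᶜ) + dd ((A 3)ᶜ) (A 4) +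
      dd (A 4) ((A 5)ᶜ) + dd ((A 5)ᶜ) (A 6) + dd (A 6) ((A 7)ᶜ) + dd ((A 7)ᶜ) (A 8) +
      dd (A 8) ((A 0)ᶜ) := by
    rw [hself] at total; exact_mod_cast total
  have hn1 : (1 : ℝ) ≤ (n : ℝ) := by exact_mod_cast hn
  linarith
end

section
/- Let Γ be an I₃-free digraph containing no pinwheel on 5 vertices, and let x, y be distinct vertices with x ≁ y. Then Δ(Δ(x)) ∩ Δ(Δ(y)) = ∅, and moreover Δ(Δ(x)) induces a tournament (any two distinct elements of Δ(Δ(x)) are joined by an arrow). -/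
/-- `E` is a digraph relation: irreflexive and asymmetric. -/
def IsDigraph {V : Type*} (E : V → V → Prop) : Prop :=
  (∀ x, ¬ E x x) ∧ ∀ x y, E x y → ¬ E y x

/-- `E` is I₃-free: any three distinct vertices span at least one arrow. -/
def I3Free {V : Type*} (E : V → V → Prop) : Prop :=
  ∀ x y z : V, x ≠ y → y ≠ z → x ≠ z →
    E x y ∨ E y x ∨ E y z ∨ E z y ∨ E x z ∨ E z x

/-- `x ≁ y`: distinct and unrelated in either direction. -/
def Nadj {V : Type*} (E : V → V → Prop) (x y : V) : Prop :=
  x ≠ y ∧ ¬ E x y ∧ ¬ E y x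

/-- `Δ(v) = {x : x ≁ v}`. -/
def Delta {V : Type*} (E : V → V → Prop) (v : V) : Set V :=
  {x | Nadj E x v}

/-- `Δ(Q) = (⋃_{v ∈ Q} Δ(v)) \ Q`. -/
def DeltaSet {V : Type*} (E : V → V → Prop) (Q : Set V) : Set V :=
  (⋃ v ∈ Q, Delta E v) \ Q

/-- The set `S` induces a tournament. -/
def IndTourn {V : Type*} (E : V → V → Prop) (S : Set V) : Prop :=
  ∀ x ∈ S, ∀ y ∈ S, x ≠ y → E x y ∨ E y x

lemma nadj_symm_s12 {V : Type*} {E : V → V → Prop} {a b : V} (h : Nadj E a b) : Nadj E b a :=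
  ⟨h.1.symm, h.2.2, h.2.1⟩

lemma mem_deltaSet_delta {V : Type*} {E : V → V → Prop} {x z : V} :
    z ∈ DeltaSet E (Delta E x) ↔ (∃ u, Nadj E u x ∧ Nadj E z u) ∧ ¬ Nadj E z x := by
  simp [DeltaSet, Delta, Set.mem_diff, Set.mem_iUnion, Set.mem_setOf_eq]

lemma no_indep_triple {V : Type*} {E : V → V → Prop} (hf : I3Free E) {a b c : V}
    (h1 : Nadj E a b) (h2 : Nadj E b c) (h3 : Nadj E a c) : False := by
  rcases hf a b c h1.1 h2.1 h3.1 with h | h | h | h | h | h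
  · exact h1.2.1 h
  · exact h1.2.2 h
  · exact h2.2.1 h
  · exact h2.2.2 h
  · exact h3.2.1 h
  · exact h3.2.2 h

lemma pinwheel5 {V : Type*} {E : V → V → Prop}
    (hC5 : ¬ ∃ v : Fin 5 → V, Function.Injective v ∧ ∀ i, Nadj E (v i) (v (i + 1)))
    {a b c d e : V}
    (hac : a ≠ c) (had : a ≠ d) (hbd : b ≠ d) (hbe : b ≠ e) (hce : c ≠ e)
    (n1 : Nadj E a b) (n2 : Nadj E b c) (n3 : Nadj E c d) (n4 : Nadj E d e)
    (n5 : Nadj E e a) : False := by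
  apply hC5
  refine ⟨![a, b, c, d, e], ?_, ?_⟩
  · have hab := n1.1; have hbc := n2.1; have hcd := n3.1; have hde := n4.1
    have hea := n5.1
    intro i j hij
    fin_cases i <;> fin_cases j <;> simp_all
  · intro i
    fin_cases i <;> simpa using (by first | exact n1 | exact n2 | exact n3 | exact n4 | exact n5)

/-- In an I₃-free digraph with no pinwheel on 5 vertices, if `x ≁ y` then
`Δ(Δ(x)) ∩ Δ(Δ(y)) = ∅` and `Δ(Δ(x))` induces a tournament. -/
theorem deltaSet_disjoint_and_tournament {V : Type*} (E : V → V → Prop)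
    (hd : IsDigraph E) (hf : I3Free E)
    (hC5 : ¬ ∃ v : Fin 5 → V, Function.Injective v ∧ ∀ i, Nadj E (v i) (v (i + 1)))
    (x y : V) (hxy : x ≠ y) (h : Nadj E x y) :
    DeltaSet E (Delta E x) ∩ DeltaSet E (Delta E y) = ∅ ∧
      IndTourn E (DeltaSet E (Delta E x)) := by
  constructor
  · ext z
    simp only [Set.mem_inter_iff, Set.mem_empty_iff_false, iff_false]
    rintro ⟨hz1, hz2⟩
    rw [mem_deltaSet_delta] at hz1 hz2
    obtain ⟨⟨u, hux, hzu⟩, hznx⟩ := hz1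
    obtain ⟨⟨w, hwy, hzw⟩, hzny⟩ := hz2
    -- key distinctness facts
    have hzx : z ≠ x := by rintro rfl; exact hzny h
    have hzy : z ≠ y := by rintro rfl; exact hznx (nadj_symm_s12 h)
    have huy : u ≠ y := by rintro rfl; exact hzny hzu
    have hwx : w ≠ x := by rintro rfl; exact hznx hzw
    by_cases huw : u = w
    · subst huw
      exact no_indep_triple hf hux h hwy
    · -- pinwheel z, u, x, y, w
      exact pinwheel5 hC5 hzx hzy huy huw hwx.symm hzu hux h
        (nadj_symm_s12 hwy) (nadj_symm_s12 hzw)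
  · intro a ha b hb hab
    by_contra hcon
    push_neg at hcon
    have hnab : Nadj E a b := ⟨hab, hcon.1, hcon.2⟩
    rw [mem_deltaSet_delta] at ha hb
    obtain ⟨⟨u, hux, hau⟩, hanx⟩ := ha
    obtain ⟨⟨w, hwx, hbw⟩, hbnx⟩ := hb
    have hax : a ≠ x := by rintro rfl; exact hbnx (nadj_symm_s12 hnab)
    have hbx : b ≠ x := by rintro rfl; exact hanx hnab
    have hub : u ≠ b := by rintro rfl; exact hbnx hux
    have haw : a ≠ w := by rintro rfl; exact hanx hwx
    by_cases huw : u = w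
    · subst huw
      exact no_indep_triple hf hnab hbw hau
    · -- pinwheel x, u, a, b, w
      exact pinwheel5 hC5 hax.symm hbx.symm hub huw haw (nadj_symm_s12 hux)
        (nadj_symm_s12 hau) hnab hbw hwx
end
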